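/- arXiv:2311.16259 — 13 statements merged into one kernel-verified Lean document; each statement's English description precedes it below -/
import Mathlib

section
/- Let Γ be a group and π : Γ → Γ̄ a surjective group homomorphism. If Γ has commuting cyclic conjugates, then Γ̄ has commuting cyclic conjugates. -/
/-- A group `G` has *commuting cyclic conjugates* if for every finitely generated
subgroup `H ≤ G` there exist `t ∈ G` and `n ∈ ℕ_{≥2} ∪ {∞}` such that
`[H, t^p H t^{-p}] = 1` for all `1 ≤ p < n` and `[H, t^n] = 1` (reading `t^∞ = 1`,
so that for `n = ∞` the second condition is vacuous). -/
def CommutingCyclicConjugates (G : Type*) [Group G] : Prop :=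
  ∀ H : Subgroup G, H.FG → ∃ (t : G) (n : ℕ∞), 2 ≤ n ∧
    (∀ p : ℕ, 1 ≤ p → (p : ℕ∞) < n →
      ∀ h ∈ H, ∀ h' ∈ H, Commute h (t ^ p * h' * (t ^ p)⁻¹)) ∧
    (∀ m : ℕ, (m : ℕ∞) = n → ∀ h ∈ H, Commute h (t ^ m))

/-- A quotient of a group with commuting cyclic conjugates has commuting cyclic
conjugates. -/
theorem quotient_commutingCyclicConjugates {G G' : Type*} [Group G] [Group G']
    (π : G →* G') (hπ : Function.Surjective π)
    (hG : CommutingCyclicConjugates G) : CommutingCyclicConjugates G' := by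
  intro H' hH'
  obtain ⟨S', hS'cl, hS'fin⟩ := (Subgroup.fg_iff H').mp hH'
  set S : Set G := Function.surjInv hπ '' S' with hS
  have hSfin : S.Finite := hS'fin.image _
  obtain ⟨t, n, h2, hcomm, hfin⟩ :=
    hG (Subgroup.closure S) ((Subgroup.fg_iff _).mpr ⟨S, rfl, hSfin⟩)
  have himg : π '' S = S' := by
    rw [hS, Set.image_image]
    simp [Function.surjInv_eq hπ]
  have hmap : (Subgroup.closure S).map π = H' := by
    rw [MonoidHom.map_closure, himg, hS'cl]
  have hlift : ∀ h ∈ H', ∃ g ∈ Subgroup.closure S, π g = h := by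
    intro h hh
    rw [← hmap] at hh
    exact hh
  refine ⟨π t, n, h2, ?_, ?_⟩
  · intro p hp1 hpn h hh h' hh'
    obtain ⟨g, hg, rfl⟩ := hlift h hh
    obtain ⟨g', hg', rfl⟩ := hlift h' hh'
    have := (hcomm p hp1 hpn g hg g' hg').map π
    simpa [mul_assoc] using this
  · intro m hm h hh
    obtain ⟨g, hg, rfl⟩ := hlift h hh
    have := (hfin m hm g hg).map π
    simpa using this
end

section
/- Let {Γ_i}_{i ∈ I} be a family of groups, each with commuting ℤ-conjugates. Then the direct product ∏_{i ∈ I} Γ_i has commuting ℤ-conjugates. -/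
/-- A group `G` has *commuting ℤ-conjugates* if for every finitely generated
subgroup `H ≤ G` there exists `t ∈ G` such that `[H, t^p H t^{-p}] = 1` for all
integers `p ≥ 1`. -/
def CommutingZConjugates (G : Type*) [Group G] : Prop :=
  ∀ H : Subgroup G, H.FG → ∃ t : G,
    ∀ p : ℕ, 1 ≤ p → ∀ h ∈ H, ∀ h' ∈ H, Commute h (t ^ p * h' * (t ^ p)⁻¹)

lemma myFG_map {G G' : Type*} [Group G] [Group G'] {H : Subgroup G} (hH : H.FG)
    (f : G →* G') : (H.map f).FG := by
  classical
  obtain ⟨S, rfl⟩ := hH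
  exact ⟨S.image f, by rw [Finset.coe_image, MonoidHom.map_closure]⟩

/-- The direct product of a family of groups with commuting ℤ-conjugates has
commuting ℤ-conjugates. -/
theorem pi_commutingZConjugates {I : Type*} (Γ : I → Type*) [∀ i, Group (Γ i)]
    (h : ∀ i, CommutingZConjugates (Γ i)) :
    CommutingZConjugates (∀ i, Γ i) := by
  intro H hH
  choose t ht using fun i => h i (H.map (Pi.evalMonoidHom Γ i)) (myFG_map hH _)
  refine ⟨t, fun p hp a ha b hb => ?_⟩
  show a * _ = _ * a
  funext i
  have := ht i p hp (a i) ⟨a, ha, rfl⟩ (b i) ⟨b, hb, rfl⟩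
  simpa [mul_assoc] using this.eq
end

section
/- Let {Γ_i}_{i ∈ I} be a family of groups, each with commuting ℤ-conjugates. Then the direct sum (restricted direct product) ⊕_{i ∈ I} Γ_i has commuting ℤ-conjugates. -/
/-- The direct sum (restricted direct product) of a family of groups: the subgroup
of the direct product consisting of elements whose coordinates equal the identity
for all but finitely many indices. -/
def directSum {I : Type*} (Γ : I → Type*) [∀ i, Group (Γ i)] : Subgroup (∀ i, Γ i) where
  carrier := {f | {i | f i ≠ 1}.Finite}
  one_mem' := by
    simp
  mul_mem' := by
    intro a b ha hb
    refine (ha.union hb).subset fun i hi => ?_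
    rw [Set.mem_union]
    by_contra hc
    push_neg at hc
    obtain ⟨h1, h2⟩ := hc
    simp only [Set.mem_setOf_eq, not_not] at h1 h2
    exact hi (by simp [Pi.mul_apply, h1, h2])
  inv_mem' := by
    intro a ha
    refine ha.subset fun i hi => ?_
    simp only [Set.mem_setOf_eq, Pi.inv_apply, ne_eq, inv_eq_one] at hi
    exact hi

/-- The direct sum of a family of groups with commuting ℤ-conjugates has
commuting ℤ-conjugates. -/
theorem directSum_commutingZConjugates {I : Type*} (Γ : I → Type*) [∀ i, Group (Γ i)]
    (h : ∀ i, CommutingZConjugates (Γ i)) :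
    CommutingZConjugates ↥(directSum Γ) := by
  classical
  intro H hFG
  obtain ⟨S, hS⟩ := hFG
  -- the projection hom
  set π : ∀ i, ↥(directSum Γ) →* Γ i :=
    fun i => (Pi.evalMonoidHom Γ i).comp (directSum Γ).subtype with hπ
  -- the finite support set
  set J : Set I := ⋃ s ∈ (S : Set ↥(directSum Γ)), {i | (s : ∀ i, Γ i) i ≠ 1} with hJ
  have hJfin : J.Finite := Set.Finite.biUnion S.finite_toSet (fun s _ => s.2)
  -- image subgroups are finitely generated
  have hmap : ∀ i, H.map (π i) = Subgroup.closure ((π i) '' (S : Set ↥(directSum Γ))) := by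
    intro i
    rw [← hS, MonoidHom.map_closure]
  have hmapFG : ∀ i, (H.map (π i)).FG := by
    intro i
    rw [Subgroup.fg_iff]
    exact ⟨(π i) '' S, (hmap i).symm, S.finite_toSet.image _⟩
  choose t ht using fun i => h i (H.map (π i)) (hmapFG i)
  -- the element t of the direct sum
  set T : ∀ i, Γ i := fun i => if i ∈ J then t i else 1 with hT
  have hTmem : T ∈ directSum Γ := by
    refine hJfin.subset fun i hi => ?_
    by_contra hc
    simp only [Set.mem_setOf_eq, hT, if_neg hc] at hi
    exact hi rfl
  -- off-support coordinates of elements of H are trivial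
  have hcoord : ∀ g ∈ H, ∀ i, i ∉ J → (g : ∀ i, Γ i) i = 1 := by
    intro g hg i hi
    have : (π i) g ∈ H.map (π i) := ⟨g, hg, rfl⟩
    rw [hmap i] at this
    have hsub : (π i) '' (S : Set ↥(directSum Γ)) ⊆ {1} := by
      rintro _ ⟨s, hs, rfl⟩
      simp only [Set.mem_singleton_iff]
      by_contra hne
      exact hi (Set.mem_biUnion hs hne)
    have hle : Subgroup.closure ((π i) '' (S : Set ↥(directSum Γ))) ≤ ⊥ := by
      rw [← Subgroup.closure_singleton_one]
      exact Subgroup.closure_mono hsub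
    exact hle this
  refine ⟨⟨T, hTmem⟩, ?_⟩
  intro p hp a ha b hb
  have key : ∀ i, Commute ((a : ∀ i, Γ i) i) (T i ^ p * (b : ∀ i, Γ i) i * (T i ^ p)⁻¹) := by
    intro i
    by_cases hi : i ∈ J
    · have hπa : (π i) a ∈ H.map (π i) := ⟨a, ha, rfl⟩
      have hπb : (π i) b ∈ H.map (π i) := ⟨b, hb, rfl⟩
      have := ht i p hp _ hπa _ hπb
      simpa [hT, hπ, if_pos hi] using this
    · rw [hcoord a ha i hi]
      exact Commute.one_left _
  -- conclude
  rw [Commute, SemiconjBy, Subtype.ext_iff]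
  funext i
  have := key i
  rw [Commute, SemiconjBy] at this
  simpa using this
end

section
/- Let Γ be a group with commuting cyclic conjugates and let d ≥ 1. Then the d-th derived subgroup Γ^{(d)} has commuting cyclic conjugates. Key step: if H ≤ [Γ,Γ] is finitely generated, t ∈ Γ, n ∈ ℕ_{≥2} ∪ {∞} satisfy [H, t^p H t^{-p}] = 1 for 1 ≤ p < n and [H, t^n] = 1, and s ∈ Γ satisfies [⟨H,t⟩, s⟨H,t⟩s^{-1}] = 1, then c := [t,s] = t·(s t^{-1} s^{-1}) lies in [Γ,Γ] and satisfies c g c^{-1} = t g t^{-1} for all g ∈ ⟨H,t⟩, hence [H, c^p H c^{-p}] = 1 for all 1 ≤ p < n and [H, c^n] = 1. -/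
section Aux

variable {G : Type*} [Group G]

/-- Map of an fg subgroup is fg. -/
lemma fgMap {H : Subgroup G} {N : Type*} [Group N] (f : G →* N) (h : H.FG) :
    (H.map f).FG := by
  classical
  obtain ⟨S, hS⟩ := h
  exact ⟨S.image f, by rw [Finset.coe_image, ← MonoidHom.map_closure, hS]⟩

lemma fgSupZpowers {H : Subgroup G} (h : H.FG) (t : G) :
    (H ⊔ Subgroup.zpowers t).FG := by
  classical
  obtain ⟨S, hS⟩ := h
  refine ⟨insert t S, ?_⟩
  rw [Finset.coe_insert, Set.insert_eq, Subgroup.closure_union, hS,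
    ← Subgroup.zpowers_eq_closure, sup_comm]

end Aux

open scoped commutatorElement in
/-- Key step in any group. -/
lemma keyStep {Γ : Type*} [Group Γ] (H : Subgroup Γ) (t s : Γ) (n : ℕ∞)
    (hcomm : ∀ p : ℕ, 1 ≤ p → (p : ℕ∞) < n →
        ∀ h ∈ H, ∀ h' ∈ H, Commute h (t ^ p * h' * (t ^ p)⁻¹))
    (hn : ∀ m : ℕ, (m : ℕ∞) = n → ∀ h ∈ H, Commute h (t ^ m))
    (hs : ∀ g ∈ (H ⊔ Subgroup.zpowers t : Subgroup Γ),
        ∀ g' ∈ (H ⊔ Subgroup.zpowers t : Subgroup Γ), Commute g (s * g' * s⁻¹)) :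
      (t * (s * t⁻¹ * s⁻¹)) ∈ commutator Γ ∧
      (∀ g ∈ (H ⊔ Subgroup.zpowers t : Subgroup Γ),
        (t * (s * t⁻¹ * s⁻¹)) * g * (t * (s * t⁻¹ * s⁻¹))⁻¹ = t * g * t⁻¹) ∧
      (∀ p : ℕ, 1 ≤ p → (p : ℕ∞) < n →
        ∀ h ∈ H, ∀ h' ∈ H,
          Commute h ((t * (s * t⁻¹ * s⁻¹)) ^ p * h' * ((t * (s * t⁻¹ * s⁻¹)) ^ p)⁻¹)) ∧
      (∀ m : ℕ, (m : ℕ∞) = n →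
        ∀ h ∈ H, Commute h ((t * (s * t⁻¹ * s⁻¹)) ^ m)) := by
  set K := (H ⊔ Subgroup.zpowers t : Subgroup Γ) with hK
  have htK : t ∈ K := Subgroup.mem_sup_right (Subgroup.mem_zpowers t)
  have hHK : H ≤ K := le_sup_left
  set c := t * (s * t⁻¹ * s⁻¹) with hc
  have hcmem : c ∈ commutator Γ := by
    have : c = ⁅t, s⁆ := by rw [hc, commutatorElement_def]; simp [mul_assoc]
    rw [this, commutator_def]
    exact Subgroup.commutator_mem_commutator (Subgroup.mem_top t) (Subgroup.mem_top s)
  have key : ∀ g ∈ K, c * g * c⁻¹ = t * g * t⁻¹ := by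
    intro g hg
    have hu : Commute g (s * t⁻¹ * s⁻¹) := by
      have := hs g hg t⁻¹ (K.inv_mem htK)
      simpa [mul_assoc] using this
    have h1 : (s * t⁻¹ * s⁻¹) * g * (s * t⁻¹ * s⁻¹)⁻¹ = g := by
      rw [mul_inv_eq_iff_eq_mul]; exact hu.eq.symm
    calc c * g * c⁻¹ = t * ((s * t⁻¹ * s⁻¹) * g * (s * t⁻¹ * s⁻¹)⁻¹) * t⁻¹ := by
          rw [hc]; group
      _ = t * g * t⁻¹ := by rw [h1]
  have powkey : ∀ p : ℕ, ∀ g ∈ K, c ^ p * g * (c ^ p)⁻¹ = t ^ p * g * (t ^ p)⁻¹ := by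
    intro p
    induction p with
    | zero => intro g hg; simp
    | succ p ih =>
      intro g hg
      have hmem : t ^ p * g * (t ^ p)⁻¹ ∈ K :=
        K.mul_mem (K.mul_mem (K.pow_mem htK p) hg) (K.inv_mem (K.pow_mem htK p))
      calc c ^ (p + 1) * g * (c ^ (p + 1))⁻¹
          = c * (c ^ p * g * (c ^ p)⁻¹) * c⁻¹ := by group
        _ = c * (t ^ p * g * (t ^ p)⁻¹) * c⁻¹ := by rw [ih g hg]
        _ = t * (t ^ p * g * (t ^ p)⁻¹) * t⁻¹ := key _ hmem
        _ = t ^ (p + 1) * g * (t ^ (p + 1))⁻¹ := by group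
  refine ⟨hcmem, key, ?_, ?_⟩
  · intro p hp1 hpn h hh h' hh'
    rw [powkey p h' (hHK hh')]
    exact hcomm p hp1 hpn h hh h' hh'
  · intro m hm h hh
    have e1 := powkey m h (hHK hh)
    have e2 : t ^ m * h * (t ^ m)⁻¹ = h := by
      rw [mul_inv_eq_iff_eq_mul]; exact (hn m hm h hh).eq.symm
    have : c ^ m * h * (c ^ m)⁻¹ = h := e1.trans e2
    rw [mul_inv_eq_iff_eq_mul] at this
    exact this.symm

/-- CCC passes to the commutator subgroup. -/
lemma cccCommutator {G : Type*} [Group G] (hG : CommutingCyclicConjugates G) :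
    CommutingCyclicConjugates ↥(commutator G) := by
  intro H hFG
  set H' := H.map (commutator G).subtype with hH'
  obtain ⟨t, n, hn2, hcomm, hpow⟩ := hG H' (fgMap _ hFG)
  obtain ⟨s₀, n₀, hn₀2, hscomm, -⟩ := hG (H' ⊔ Subgroup.zpowers t) (fgSupZpowers (fgMap _ hFG) t)
  have hs : ∀ g ∈ (H' ⊔ Subgroup.zpowers t : Subgroup G),
      ∀ g' ∈ (H' ⊔ Subgroup.zpowers t : Subgroup G), Commute g (s₀ * g' * s₀⁻¹) := by
    intro g hg g' hg'
    have h1 : (1 : ℕ∞) < n₀ := lt_of_lt_of_le (by norm_num) hn₀2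
    simpa using hscomm 1 le_rfl h1 g hg g' hg'
  obtain ⟨hcmem, -, hc3, hc4⟩ := keyStep H' t s₀ n hcomm hpow hs
  refine ⟨⟨_, hcmem⟩, n, hn2, ?_, ?_⟩
  · intro p hp1 hpn h hh h' hh'
    have := hc3 p hp1 hpn (↑h) ⟨h, hh, rfl⟩ (↑h') ⟨h', hh', rfl⟩
    exact Subtype.ext (by push_cast; exact this.eq)
  · intro m hm h hh
    have := hc4 m hm (↑h) ⟨h, hh, rfl⟩
    exact Subtype.ext (by push_cast; exact this.eq)

/-- CCC transfers along group isomorphisms. -/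
lemma cccCongr {G G' : Type*} [Group G] [Group G'] (e : G ≃* G')
    (h : CommutingCyclicConjugates G) : CommutingCyclicConjugates G' := by
  intro H' hH'
  obtain ⟨t, n, hn2, h1, h2⟩ := h (H'.map e.symm.toMonoidHom) (fgMap _ hH')
  refine ⟨e t, n, hn2, ?_, ?_⟩
  · intro p hp1 hpn g hg g' hg'
    have := (h1 p hp1 hpn (e.symm g) ⟨g, hg, rfl⟩ (e.symm g') ⟨g', hg', rfl⟩).map e.toMonoidHom
    simpa using this
  · intro m hm g hg
    have := (h2 m hm (e.symm g) ⟨g, hg, rfl⟩).map e.toMonoidHom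
    simpa using this

/-- If `Γ` has commuting cyclic conjugates, then so does every derived subgroup
`Γ^{(d)}`, `d ≥ 1`.  Moreover (key step, which holds in any group): if
`H ≤ [Γ,Γ]` is finitely generated, `t ∈ Γ`, `n ∈ ℕ_{≥2} ∪ {∞}` satisfy
`[H, t^p H t^{-p}] = 1` for `1 ≤ p < n` and `[H, t^n] = 1`, and `s ∈ Γ` satisfies
`[⟨H,t⟩, s ⟨H,t⟩ s⁻¹] = 1`, then `c := [t,s] = t·(s t⁻¹ s⁻¹)` lies in `[Γ,Γ]`,
satisfies `c g c⁻¹ = t g t⁻¹` for all `g ∈ ⟨H,t⟩`, and hence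
`[H, c^p H c^{-p}] = 1` for `1 ≤ p < n` and `[H, c^n] = 1`. -/
theorem derivedSeries_commutingCyclicConjugates {Γ : Type*} [Group Γ]
    (hΓ : CommutingCyclicConjugates Γ) :
    (∀ d : ℕ, 1 ≤ d → CommutingCyclicConjugates ↥(derivedSeries Γ d)) ∧
    (∀ (H : Subgroup Γ) (t s : Γ) (n : ℕ∞),
      H ≤ commutator Γ → H.FG → 2 ≤ n →
      (∀ p : ℕ, 1 ≤ p → (p : ℕ∞) < n →
        ∀ h ∈ H, ∀ h' ∈ H, Commute h (t ^ p * h' * (t ^ p)⁻¹)) →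
      (∀ m : ℕ, (m : ℕ∞) = n → ∀ h ∈ H, Commute h (t ^ m)) →
      (∀ g ∈ (H ⊔ Subgroup.zpowers t : Subgroup Γ),
        ∀ g' ∈ (H ⊔ Subgroup.zpowers t : Subgroup Γ), Commute g (s * g' * s⁻¹)) →
      (t * (s * t⁻¹ * s⁻¹)) ∈ commutator Γ ∧
      (∀ g ∈ (H ⊔ Subgroup.zpowers t : Subgroup Γ),
        (t * (s * t⁻¹ * s⁻¹)) * g * (t * (s * t⁻¹ * s⁻¹))⁻¹ = t * g * t⁻¹) ∧
      (∀ p : ℕ, 1 ≤ p → (p : ℕ∞) < n →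
        ∀ h ∈ H, ∀ h' ∈ H,
          Commute h ((t * (s * t⁻¹ * s⁻¹)) ^ p * h' * ((t * (s * t⁻¹ * s⁻¹)) ^ p)⁻¹)) ∧
      (∀ m : ℕ, (m : ℕ∞) = n →
        ∀ h ∈ H, Commute h ((t * (s * t⁻¹ * s⁻¹)) ^ m))) := by
  constructor
  · intro d hd
    induction d with
    | zero => omega
    | succ d ih =>
      rcases Nat.eq_zero_or_pos d with rfl | hd'
      · show CommutingCyclicConjugates ↥(derivedSeries Γ 1)
        rw [derivedSeries_one]
        exact cccCommutator hΓ
      · have h1 := cccCommutator (ih hd')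
        have h2 : (commutator ↥(derivedSeries Γ d)).map (derivedSeries Γ d).subtype
            = derivedSeries Γ (d + 1) := by
          rw [derivedSeries_succ, commutator_def, Subgroup.map_commutator,
            ← MonoidHom.range_eq_map, Subgroup.range_subtype]
        have e := Subgroup.equivMapOfInjective (commutator ↥(derivedSeries Γ d))
          (derivedSeries Γ d).subtype (derivedSeries Γ d).subtype_injective
        have := cccCongr e h1
        rwa [h2] at this
  · intro H t s n _ _ _ hcomm hpow hs
    exact keyStep H t s n hcomm hpow hs
end

section
/- Let X be a topological space and T a group of compactly supported homeomorphisms of X. Suppose that for every compact subset K ⊂ X there exists t ∈ T such that the sets t^p(K), p ≥ 1, are pairwise disjoint. Then every group G with T ≤ G ≤ Homeo_c(X) (the group of compactly supported homeomorphisms) has commuting ℤ-conjugates. -/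
/-- The group of self-homeomorphisms of `X`, with composition as multiplication. -/
instance homeoGroup (X : Type*) [TopologicalSpace X] : Group (X ≃ₜ X) where
  mul f g := g.trans f
  one := Homeomorph.refl X
  inv := Homeomorph.symm
  mul_assoc _ _ _ := rfl
  one_mul _ := rfl
  mul_one _ := rfl
  inv_mul_cancel a := Homeomorph.ext fun x => a.symm_apply_apply x

/-- Let `T` be a group of compactly supported homeomorphisms of `X` such that every
compact set `K ⊆ X` admits `t ∈ T` whose powers `t^p`, `p ≥ 1`, displace `K` to
pairwise disjoint sets.  Then every group `G` of compactly supported homeomorphisms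
with `T ≤ G` has commuting ℤ-conjugates. -/
theorem commutingZConjugates_of_displacement {X : Type*} [TopologicalSpace X]
    (T G : Subgroup (X ≃ₜ X))
    (hT : ∀ f ∈ T, IsCompact (closure {x | f x ≠ x}))
    (hG : ∀ f ∈ G, IsCompact (closure {x | f x ≠ x}))
    (hTG : T ≤ G)
    (hdisp : ∀ K : Set X, IsCompact K → ∃ t ∈ T,
      ∀ p q : ℕ, 1 ≤ p → 1 ≤ q → p ≠ q →
        Disjoint ((t ^ p : X ≃ₜ X) '' K) ((t ^ q : X ≃ₜ X) '' K)) :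
    CommutingZConjugates ↥G := by
  intro H hHfg
  obtain ⟨S, hS⟩ := hHfg
  set K : Set X := ⋃ s ∈ S, closure {x | (s : X ≃ₜ X) x ≠ x} with hKdef
  have hKcompact : IsCompact K :=
    S.finite_toSet.isCompact_biUnion (fun s _ => hG (s : X ≃ₜ X) s.2)
  -- every element of H fixes the complement of K
  have hfix : ∀ h ∈ H, ∀ x, x ∉ K → (h : X ≃ₜ X) x = x := by
    intro h hh
    rw [← hS] at hh
    refine Subgroup.closure_induction ?_ ?_ ?_ ?_ hh
    · intro s hs x hx
      by_contra hne
      exact hx (Set.mem_biUnion hs (subset_closure hne))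
    · intro x _
      rfl
    · intro a b _ _ ha hb x hx
      show (a : X ≃ₜ X) ((b : X ≃ₜ X) x) = x
      rw [hb x hx, ha x hx]
    · intro a _ ha x hx
      show (a : X ≃ₜ X).symm x = x
      conv_lhs => rw [← ha x hx]
      exact (a : X ≃ₜ X).symm_apply_apply x
  -- elements of H map K into K
  have key : ∀ a ∈ H, ∀ x ∈ K, (a : X ≃ₜ X) x ∈ K := by
    intro a ha x hx
    by_contra hout
    have h1 := hfix _ (inv_mem ha) _ hout
    have h2 : ((a : X ≃ₜ X)).symm ((a : X ≃ₜ X) x) = (a : X ≃ₜ X) x := h1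
    rw [(a : X ≃ₜ X).symm_apply_apply] at h2
    exact hout (h2 ▸ hx)
  obtain ⟨t, htT, hd⟩ := hdisp K hKcompact
  refine ⟨⟨t, hTG htT⟩, ?_⟩
  intro p hp h hh h' hh'
  set u : X ≃ₜ X := t ^ p with hu
  have hdisj : Disjoint K (u '' K) := by
    have h2 := hd p (2 * p) hp (by omega) (by omega)
    have himg : (t ^ (2 * p)) '' K = u '' (u '' K) := by
      rw [Set.image_image]
      have : ∀ x, (t ^ (2 * p)) x = u (u x) := by
        intro x
        rw [hu, two_mul, pow_add]
        rfl
      exact Set.image_congr fun x _ => (this x)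
    rw [himg] at h2
    exact (Set.disjoint_image_iff u.injective).mp h2
  -- basic facts about the conjugate map
  have happly : ∀ y, y ∉ u '' K → u⁻¹ y ∉ K := by
    intro y hy hk
    exact hy ⟨u⁻¹ y, hk, u.apply_symm_apply y⟩
  have hgfix : ∀ y, y ∉ u '' K → u ((h' : X ≃ₜ X) (u⁻¹ y)) = y := by
    intro y hy
    rw [hfix h' hh' _ (happly y hy)]
    exact u.apply_symm_apply y
  have hgmem : ∀ y ∈ u '' K, u ((h' : X ≃ₜ X) (u⁻¹ y)) ∈ u '' K := by
    rintro y ⟨k, hk, rfl⟩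
    refine ⟨(h' : X ≃ₜ X) (u⁻¹ (u k)), ?_, rfl⟩
    have : (u⁻¹ (u k) : X) = k := u.symm_apply_apply k
    rw [this]
    exact key h' hh' k hk
  -- now prove commutation pointwise
  refine Subtype.ext (Homeomorph.ext fun x => ?_)
  have hcoe : ((h * ((⟨t, hTG htT⟩ : ↥G) ^ p * h' * ((⟨t, hTG htT⟩ : ↥G) ^ p)⁻¹) : ↥G) : X ≃ₜ X) x
      = (h : X ≃ₜ X) (u ((h' : X ≃ₜ X) (u⁻¹ x))) := rfl
  have hcoe2 : ((((⟨t, hTG htT⟩ : ↥G) ^ p * h' * ((⟨t, hTG htT⟩ : ↥G) ^ p)⁻¹) * h : ↥G) : X ≃ₜ X) x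
      = u ((h' : X ≃ₜ X) (u⁻¹ ((h : X ≃ₜ X) x))) := rfl
  show ((h * _ : ↥G) : X ≃ₜ X) x = _
  rw [hcoe, hcoe2]
  by_cases hxK : x ∈ K
  · have hxB : x ∉ u '' K := fun hmem => (hdisj.ne_of_mem hxK hmem) rfl
    rw [hgfix x hxB]
    have hhx : (h : X ≃ₜ X) x ∈ K := key h hh x hxK
    have hhxB : (h : X ≃ₜ X) x ∉ u '' K := fun hmem => (hdisj.ne_of_mem hhx hmem) rfl
    rw [hgfix _ hhxB]
  · rw [hfix h hh x hxK]
    by_cases hxB : x ∈ u '' K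
    · have hgB := hgmem x hxB
      have hgK : u ((h' : X ≃ₜ X) (u⁻¹ x)) ∉ K := fun hmem => (hdisj.ne_of_mem hmem hgB) rfl
      rw [hfix h hh _ hgK]
    · rw [hgfix x hxB]
      exact hfix h hh x hxK
end

section
/- Let X be a topological space and T a group of compactly supported homeomorphisms of X. Suppose that for every compact subset K ⊂ X there exists t ∈ T such that t(K) ∩ K = ∅ and t^2 restricted to K is the identity, and moreover supp(H) ⊂ K implies the support of any h ∈ H is contained in K. Then every group G with T ≤ G ≤ Homeo_c(X) has commuting cyclic conjugates (with n = 2 in the definition). -/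
section aux
variable {X : Type*} [TopologicalSpace X]

lemma hg_mul_apply (f g : X ≃ₜ X) (x : X) : (f * g) x = f (g x) := rfl
lemma hg_inv_apply (f : X ≃ₜ X) (x : X) : f⁻¹ x = f.symm x := rfl
lemma hg_one_apply (x : X) : (1 : X ≃ₜ X) x = x := rfl

lemma hg_supp_inv (f : X ≃ₜ X) : {x | f⁻¹ x ≠ x} = {x | f x ≠ x} := by
  ext x
  simp only [Set.mem_setOf_eq, hg_inv_apply]
  constructor
  · intro h hc
    exact h (by calc f.symm x = f.symm (f x) := by rw [hc]
                 _ = x := f.symm_apply_apply x)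
  · intro h hc
    exact h (by calc f x = f (f.symm x) := by rw [hc]
                 _ = x := f.apply_symm_apply x)

lemma commute_of_disjoint_supp (f g : X ≃ₜ X)
    (h : Disjoint {x | f x ≠ x} {x | g x ≠ x}) : Commute f g := by
  have key : ∀ x, f (g x) = g (f x) := by
    intro x
    by_cases hf : f x = x
    · by_cases hgx : g x = x
      · simp [hf, hgx]
      · have hm : g x ∈ {y | g y ≠ y} := fun hc => hgx (g.injective hc)
        have : g x ∉ {y | f y ≠ y} := Set.disjoint_right.mp h hm
        simp only [Set.mem_setOf_eq, not_not] at this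
        rw [this, hf]
    · have hgx : g x = x := by
        by_contra hc
        exact Set.disjoint_left.mp h hf hc
      have hm : f x ∈ {y | f y ≠ y} := fun hc => hf (f.injective hc)
      have : f x ∉ {y | g y ≠ y} := Set.disjoint_left.mp h hm
      simp only [Set.mem_setOf_eq, not_not] at this
      rw [hgx, this]
  exact Homeomorph.ext key

end aux

/-- Let `T` be a group of compactly supported homeomorphisms of `X` such that every
compact set `K ⊆ X` admits `t ∈ T` with `t(K) ∩ K = ∅` and `t² = id` on `K`.  Then
every group `G` of compactly supported homeomorphisms with `T ≤ G` has commuting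
cyclic conjugates (with `n = 2` in the definition). -/
theorem commutingCyclicConjugates_of_displacement {X : Type*} [TopologicalSpace X]
    (T G : Subgroup (X ≃ₜ X))
    (hT : ∀ f ∈ T, IsCompact (closure {x | f x ≠ x}))
    (hG : ∀ f ∈ G, IsCompact (closure {x | f x ≠ x}))
    (hTG : T ≤ G)
    (hdisp : ∀ K : Set X, IsCompact K → ∃ t ∈ T,
      Disjoint ((t : X ≃ₜ X) '' K) K ∧ ∀ x ∈ K, t (t x) = x) :
    CommutingCyclicConjugates ↥G := by
  intro H hH
  obtain ⟨S, hS⟩ := hH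
  set K : Set X := ⋃ g ∈ (S : Set ↥G), closure {x | (g : X ≃ₜ X) x ≠ x} with hKdef
  have hKc : IsCompact K := S.finite_toSet.isCompact_biUnion
    (fun g _ => hG (g : X ≃ₜ X) g.2)
  have hsupp : ∀ h ∈ H, {x | (h : X ≃ₜ X) x ≠ x} ⊆ K := by
    intro h hh
    rw [← hS] at hh
    induction hh using Subgroup.closure_induction with
    | mem g hg => exact (subset_closure).trans (Set.subset_biUnion_of_mem (u := fun g : ↥G => closure {x | (g : X ≃ₜ X) x ≠ x}) hg)
    | one => intro x hx; exact absurd rfl hx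
    | mul a b _ _ ha hb =>
        intro x hx
        by_cases hbx : (b : X ≃ₜ X) x = x
        · exact ha (by simpa [hg_mul_apply, hbx] using hx)
        · exact hb hbx
    | inv a _ ha => intro x hx; exact ha (by rwa [← hg_supp_inv])
  obtain ⟨t, htT, hdisj, hts⟩ := hdisp K hKc
  refine ⟨⟨t, hTG htT⟩, 2, le_refl _, ?_, ?_⟩
  · -- p = 1 case
    intro p hp1 hp2 h hh h' hh'
    have hp : p = 1 := by
      have : p < 2 := by exact_mod_cast hp2
      omega
    subst hp
    have hconj : {x | (t * (h' : X ≃ₜ X) * t⁻¹) x ≠ x} ⊆ t '' K := by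
      intro x hx
      have hx' : t ((h' : X ≃ₜ X) (t.symm x)) ≠ x := hx
      have hy : (h' : X ≃ₜ X) (t.symm x) ≠ t.symm x := by
        intro hc
        exact hx' (by rw [hc, t.apply_symm_apply])
      exact ⟨t.symm x, hsupp h' hh' hy, t.apply_symm_apply x⟩
    have hcomm : Commute (h : X ≃ₜ X) (t * (h' : X ≃ₜ X) * t⁻¹) :=
      commute_of_disjoint_supp _ _
        (Set.disjoint_left.mpr fun x hxh hxc =>
          Set.disjoint_right.mp hdisj (hsupp h hh hxh) (hconj hxc))
    have : (h : X ≃ₜ X) * (t * (h' : X ≃ₜ X) * t⁻¹)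
        = (t * (h' : X ≃ₜ X) * t⁻¹) * (h : X ≃ₜ X) := hcomm
    apply Subtype.ext
    push_cast
    simpa [pow_one] using this
  · -- m = 2 case
    intro m hm h hh
    have hm2 : m = 2 := by exact_mod_cast hm
    subst hm2
    have hKfix : ∀ x ∈ K, t (t x) = x := hts
    have key : ∀ x, (h : X ≃ₜ X) (t (t x)) = t (t ((h : X ≃ₜ X) x)) := by
      intro x
      by_cases hxK : x ∈ K
      · rw [hKfix x hxK]
        have hhx : (h : X ≃ₜ X) x ∈ K := by
          by_cases hfix : (h : X ≃ₜ X) x = x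
          · rw [hfix]; exact hxK
          · exact hsupp h hh (fun hc => hfix ((h : X ≃ₜ X).injective hc))
        rw [hKfix _ hhx]
      · have hhx : (h : X ≃ₜ X) x = x := by
          by_contra hc
          exact hxK (hsupp h hh hc)
        rw [hhx]
        have httx : t (t x) ∉ K := by
          intro hc
          have := hKfix _ hc
          have hinj : t (t (t (t x))) = t (t x) := this
          have : t (t x) = x := t.injective (t.injective hinj)
          rw [this] at hc
          exact hxK hc
        have : (h : X ≃ₜ X) (t (t x)) = t (t x) := by
          by_contra hc
          exact httx (hsupp h hh hc)
        rw [this]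
    have : (h : X ≃ₜ X) * (t * t) = (t * t) * (h : X ≃ₜ X) :=
      Homeomorph.ext key
    apply Subtype.ext
    push_cast
    simpa [pow_two] using this
end

section
/- Let G be a group of compactly supported orientation-preserving homeomorphisms of the real line acting without a global fixed point. Then for every compact set K ⊂ ℝ there exists t ∈ G such that the sets t^p(K), p ≥ 1, are pairwise disjoint; consequently G has commuting ℤ-conjugates. -/
lemma homeo_mul_apply {X : Type*} [TopologicalSpace X] (f g : X ≃ₜ X) (x : X) :
    (f * g) x = f (g x) := rfl

lemma homeo_one_apply {X : Type*} [TopologicalSpace X] (x : X) :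
    (1 : X ≃ₜ X) x = x := rfl

lemma homeo_inv_apply {X : Type*} [TopologicalSpace X] (f : X ≃ₜ X) (x : X) :
    f⁻¹ x = f.symm x := rfl

/-- If a homeomorphism fixes every point outside `A`, then it maps `A` into `A`. -/
lemma homeo_maps_of_fix {X : Type*} [TopologicalSpace X] (f : X ≃ₜ X) (A : Set X)
    (hf : ∀ x ∉ A, f x = x) : ∀ x ∈ A, f x ∈ A := by
  intro x hx
  by_contra hfx
  have h1 : f (f x) = f x := hf (f x) hfx
  have h2 : f x = x := f.injective h1
  rw [h2] at hfx
  exact hfx hx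

/-- Displacement lemma: in a fixed-point-free group of orientation-preserving
homeomorphisms of the line, every compact set can be displaced by all the
positive powers of a single element, in an order-increasing fashion. -/
lemma displace_lemma (G : Subgroup (ℝ ≃ₜ ℝ))
    (hmono : ∀ g ∈ G, Monotone (g : ℝ ≃ₜ ℝ))
    (hnofix : ∀ x : ℝ, ∃ g ∈ G, g x ≠ x) (K : Set ℝ) (hK : IsCompact K) :
    ∃ t ∈ G, ∀ p q : ℕ, p < q → ∀ x ∈ K, ∀ y ∈ K,
      (t ^ p : ℝ ≃ₜ ℝ) x < (t ^ q : ℝ ≃ₜ ℝ) y := by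
  rcases K.eq_empty_or_nonempty with hKe | hKne
  · obtain ⟨g, hg, -⟩ := hnofix 0
    exact ⟨g, hg, fun p q _ x hx => by simp [hKe] at hx⟩
  set a := sInf K with ha
  set b := sSup K with hb
  -- find t with b < t a
  have hexists : ∃ t ∈ G, b < t a := by
    by_contra hcon
    push_neg at hcon
    set S : Set ℝ := {y | ∃ g ∈ G, g a = y} with hSdef
    have hne : a ∈ S := ⟨1, G.one_mem, rfl⟩
    have hbdd : BddAbove S := ⟨b, by rintro _ ⟨g, hg, rfl⟩; exact hcon g hg⟩
    set s := sSup S with hs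
    have key : ∀ g ∈ G, g s ≤ s := by
      intro g hg
      have h1 : g s = sSup ((g : ℝ → ℝ) '' S) :=
        (hmono g hg).map_csSup_of_continuousAt g.continuous.continuousAt ⟨a, hne⟩ hbdd
      rw [h1]
      apply csSup_le (Set.Nonempty.image _ ⟨a, hne⟩)
      rintro _ ⟨_, ⟨k, hk, rfl⟩, rfl⟩
      exact le_csSup hbdd ⟨g * k, G.mul_mem hg hk, rfl⟩
    have hfix : ∀ g ∈ G, g s = s := by
      intro g hg
      refine le_antisymm (key g hg) ?_
      have h1 : g⁻¹ s ≤ s := key g⁻¹ (G.inv_mem hg)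
      have h2 : g (g⁻¹ s) ≤ g s := hmono g hg h1
      have h3 : g (g⁻¹ s) = s := g.apply_symm_apply s
      linarith [h2, h3.symm.le]
    obtain ⟨g, hg, hgs⟩ := hnofix s
    exact hgs (hfix g hg)
  obtain ⟨t, htG, hta⟩ := hexists
  have ht_strict : StrictMono (t : ℝ → ℝ) :=
    (hmono t htG).strictMono_of_injective t.injective
  have hab : a ≤ b := csInf_le_csSup hKne hK.bddBelow hK.bddAbove
  have hat : a < t a := lt_of_le_of_lt hab hta
  have spow : ∀ n : ℕ, StrictMono ((t ^ n : ℝ ≃ₜ ℝ) : ℝ → ℝ) := by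
    intro n
    induction n with
    | zero =>
      have : ((t ^ 0 : ℝ ≃ₜ ℝ) : ℝ → ℝ) = id := by rw [pow_zero]; rfl
      rw [this]; exact strictMono_id
    | succ n ih =>
      have h : ((t ^ (n + 1) : ℝ ≃ₜ ℝ) : ℝ → ℝ)
          = ((t ^ n : ℝ ≃ₜ ℝ) : ℝ → ℝ) ∘ (t : ℝ → ℝ) := by
        rw [pow_succ]; rfl
      rw [h]; exact ih.comp ht_strict
  have hge : ∀ n : ℕ, a ≤ (t ^ n : ℝ ≃ₜ ℝ) a := by
    intro n
    induction n with
    | zero => rw [pow_zero]; exact le_of_eq rfl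
    | succ n ih =>
      have h : (t ^ (n + 1) : ℝ ≃ₜ ℝ) a = (t ^ n : ℝ ≃ₜ ℝ) (t a) := by
        rw [pow_succ]; rfl
      rw [h]
      exact le_trans ih ((spow n).monotone hat.le)
  have hgt : ∀ n : ℕ, 1 ≤ n → b < (t ^ n : ℝ ≃ₜ ℝ) a := by
    intro n hn
    obtain ⟨m, rfl⟩ := Nat.exists_eq_add_of_le hn
    have h : (t ^ (1 + m) : ℝ ≃ₜ ℝ) a = t ((t ^ m : ℝ ≃ₜ ℝ) a) := by
      rw [add_comm, pow_succ']; rfl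
    rw [h]
    exact lt_of_lt_of_le hta (ht_strict.monotone (hge m))
  refine ⟨t, htG, ?_⟩
  intro p q hpq x hx y hy
  have hq : q = p + (q - p) := by omega
  have h1 : (t ^ q : ℝ ≃ₜ ℝ) y = (t ^ p : ℝ ≃ₜ ℝ) ((t ^ (q - p) : ℝ ≃ₜ ℝ) y) := by
    conv_lhs => rw [hq, pow_add]
    rfl
  have hxb : x ≤ b := le_csSup hK.bddAbove hx
  have hay : a ≤ y := csInf_le hK.bddBelow hy
  have h2 : x < (t ^ (q - p) : ℝ ≃ₜ ℝ) y :=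
    lt_of_le_of_lt hxb (lt_of_lt_of_le (hgt (q - p) (by omega))
      ((spow (q - p)).monotone hay))
  rw [h1]
  exact (spow p) h2

/-- Let `G` be a group of compactly supported orientation-preserving homeomorphisms
of the real line acting without a global fixed point.  Then every compact set
`K ⊆ ℝ` admits `t ∈ G` whose powers `t^p`, `p ≥ 1`, displace `K` to pairwise
disjoint sets; consequently `G` has commuting ℤ-conjugates. -/
theorem line_commutingZConjugates (G : Subgroup (ℝ ≃ₜ ℝ))
    (hsupp : ∀ g ∈ G, IsCompact (closure {x : ℝ | g x ≠ x}))
    (hmono : ∀ g ∈ G, Monotone (g : ℝ ≃ₜ ℝ))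
    (hnofix : ∀ x : ℝ, ∃ g ∈ G, g x ≠ x) :
    (∀ K : Set ℝ, IsCompact K → ∃ t ∈ G,
      ∀ p q : ℕ, 1 ≤ p → 1 ≤ q → p ≠ q →
        Disjoint ((t ^ p : ℝ ≃ₜ ℝ) '' K) ((t ^ q : ℝ ≃ₜ ℝ) '' K)) ∧
    CommutingZConjugates ↥G := by
  constructor
  · intro K hK
    obtain ⟨t, htG, hdisp⟩ := displace_lemma G hmono hnofix K hK
    refine ⟨t, htG, ?_⟩
    intro p q hp hq hne
    have key : ∀ p q : ℕ, p < q →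
        Disjoint ((t ^ p : ℝ ≃ₜ ℝ) '' K) ((t ^ q : ℝ ≃ₜ ℝ) '' K) := by
      intro p q hpq
      rw [Set.disjoint_left]
      rintro z ⟨x, hx, rfl⟩ ⟨y, hy, hzy⟩
      exact (ne_of_lt (hdisp p q hpq x hx y hy)) hzy.symm
    rcases lt_or_gt_of_ne hne with h | h
    · exact key p q h
    · exact (key q p h).symm
  · intro H hFG
    obtain ⟨S, hS⟩ := hFG
    set K : Set ℝ := ⋃ g ∈ S, closure {x : ℝ | (g : ℝ ≃ₜ ℝ) x ≠ x} with hKdef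
    have hKc : IsCompact K :=
      S.finite_toSet.isCompact_biUnion (fun g _ => hsupp (g : ℝ ≃ₜ ℝ) g.2)
    obtain ⟨t₀, ht₀G, hdisp⟩ := displace_lemma G hmono hnofix K hKc
    set t : ↥G := ⟨t₀, ht₀G⟩ with htdef
    -- every element of H fixes the complement of K
    have hfixH : ∀ h ∈ H, ∀ x ∉ K, (h : ℝ ≃ₜ ℝ) x = x := by
      set T : Subgroup ↥G :=
        { carrier := {h : ↥G | ∀ x ∉ K, (h : ℝ ≃ₜ ℝ) x = x}
          one_mem' := fun x _ => rfl
          mul_mem' := by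
            intro u v hu hv x hx
            have : ((u * v : ↥G) : ℝ ≃ₜ ℝ) x = (u : ℝ ≃ₜ ℝ) ((v : ℝ ≃ₜ ℝ) x) := rfl
            rw [this, hv x hx, hu x hx]
          inv_mem' := by
            intro u hu x hx
            have h1 : ((u⁻¹ : ↥G) : ℝ ≃ₜ ℝ) x = (u : ℝ ≃ₜ ℝ).symm x := rfl
            rw [h1]
            conv_lhs => rw [← hu x hx]
            exact (u : ℝ ≃ₜ ℝ).symm_apply_apply x } with hTdef
      have hST : ↑S ⊆ (T : Set ↥G) := by
        intro g hgS x hx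
        by_contra hgx
        exact hx (Set.mem_biUnion hgS (subset_closure hgx))
      have hHT : H ≤ T := by
        rw [← hS]
        exact (Subgroup.closure_le T).mpr hST
      exact fun h hh => hHT hh
    refine ⟨t, ?_⟩
    intro p hp h hH h' h'H
    set A : Set ℝ := (t₀ ^ p : ℝ ≃ₜ ℝ) '' K with hAdef
    -- K and A are disjoint
    have hKA : ∀ x ∈ K, x ∉ A := by
      rintro x hx ⟨y, hy, hyx⟩
      have := hdisp 0 p (by omega) x hx y hy
      rw [pow_zero, homeo_one_apply] at this
      exact (ne_of_lt this).symm hyx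
    have hAK : ∀ x ∈ A, x ∉ K := fun x hxA hxK => hKA x hxK hxA
    -- the coercion of t ^ p
    have hcoe_pow : ((t ^ p : ↥G) : ℝ ≃ₜ ℝ) = (t₀ ^ p : ℝ ≃ₜ ℝ) := by
      rw [htdef]; exact SubmonoidClass.coe_pow _ p
    set c : ↥G := t ^ p * h' * (t ^ p)⁻¹ with hcdef
    have hc_apply : ∀ x : ℝ, (c : ℝ ≃ₜ ℝ) x
        = (t₀ ^ p : ℝ ≃ₜ ℝ) ((h' : ℝ ≃ₜ ℝ) ((t₀ ^ p : ℝ ≃ₜ ℝ).symm x)) := by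
      intro x
      have : (c : ℝ ≃ₜ ℝ)
          = ((t ^ p : ↥G) : ℝ ≃ₜ ℝ) * (h' : ℝ ≃ₜ ℝ) * (((t ^ p : ↥G) : ℝ ≃ₜ ℝ))⁻¹ := rfl
      rw [this, hcoe_pow]
      rfl
    -- c fixes the complement of A
    have hc_fix : ∀ x ∉ A, (c : ℝ ≃ₜ ℝ) x = x := by
      intro x hx
      have hsymm : (t₀ ^ p : ℝ ≃ₜ ℝ).symm x ∉ K := by
        intro hmem
        exact hx ⟨_, hmem, (t₀ ^ p : ℝ ≃ₜ ℝ).apply_symm_apply x⟩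
      rw [hc_apply x, hfixH h' h'H _ hsymm]
      exact (t₀ ^ p : ℝ ≃ₜ ℝ).apply_symm_apply x
    have hc_maps : ∀ x ∈ A, (c : ℝ ≃ₜ ℝ) x ∈ A :=
      homeo_maps_of_fix _ A hc_fix
    have hf_fix : ∀ x ∉ K, (h : ℝ ≃ₜ ℝ) x = x := hfixH h hH
    have hf_maps : ∀ x ∈ K, (h : ℝ ≃ₜ ℝ) x ∈ K :=
      homeo_maps_of_fix _ K hf_fix
    -- now prove commutation
    have key : ∀ x : ℝ, (h : ℝ ≃ₜ ℝ) ((c : ℝ ≃ₜ ℝ) x) = (c : ℝ ≃ₜ ℝ) ((h : ℝ ≃ₜ ℝ) x) := by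
      intro x
      by_cases hx : x ∈ K
      · have h1 : (c : ℝ ≃ₜ ℝ) x = x := hc_fix x (hKA x hx)
        have h2 : (h : ℝ ≃ₜ ℝ) x ∈ K := hf_maps x hx
        have h3 : (c : ℝ ≃ₜ ℝ) ((h : ℝ ≃ₜ ℝ) x) = (h : ℝ ≃ₜ ℝ) x :=
          hc_fix _ (hKA _ h2)
        rw [h1, h3]
      · by_cases hxA : x ∈ A
        · have h1 : (h : ℝ ≃ₜ ℝ) x = x := hf_fix x hx
          have h2 : (c : ℝ ≃ₜ ℝ) x ∈ A := hc_maps x hxA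
          have h3 : (h : ℝ ≃ₜ ℝ) ((c : ℝ ≃ₜ ℝ) x) = (c : ℝ ≃ₜ ℝ) x :=
            hf_fix _ (hAK _ h2)
          rw [h1, h3]
        · simp only [hc_fix x hxA, hf_fix x hx]
    show h * c = c * h
    apply Subtype.ext
    have hmulcoe : ∀ u v : ↥G, ((u * v : ↥G) : ℝ ≃ₜ ℝ) = (u : ℝ ≃ₜ ℝ) * (v : ℝ ≃ₜ ℝ) := by
      intro u v; rfl
    rw [hmulcoe, hmulcoe]
    apply Homeomorph.ext
    intro x
    rw [homeo_mul_apply, homeo_mul_apply]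
    exact key x
end

section
/- Let R be a ring with identity. The direct limit general linear group GL(R) = ⋃_{n≥1} GL_n(R), under the upper-left-corner inclusions, has commuting cyclic conjugates: for every finitely generated subgroup H contained in the image of GL_n(R) (with n even, enlarging if necessary), the permutation matrix t implementing the involution swapping basis vectors e_i ↔ e_{n+i} for 1 ≤ i ≤ n (with sign chosen so that t ∈ GL_{2n}(R) has determinant 1, e.g. an even permutation) satisfies [H, tHt^{-1}] = 1 and t^2 = 1. -/
/-- The upper-left-corner inclusion of matrix monoids, `M ↦ diag(M, 1)`. -/
def cornerHom (R : Type*) [Ring R] (n : ℕ) :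
    Matrix (Fin n) (Fin n) R →* Matrix (Fin (n + 1)) (Fin (n + 1)) R where
  toFun M := (Matrix.fromBlocks M 0 0 (1 : Matrix (Fin 1) (Fin 1) R)).submatrix
    finSumFinEquiv.symm finSumFinEquiv.symm
  map_one' := by
    show (Matrix.fromBlocks (1 : Matrix (Fin n) (Fin n) R) 0 0
        (1 : Matrix (Fin 1) (Fin 1) R)).submatrix
      finSumFinEquiv.symm finSumFinEquiv.symm = 1
    rw [Matrix.fromBlocks_one]
    exact Matrix.submatrix_one_equiv finSumFinEquiv.symm
  map_mul' M N := by
    show (Matrix.fromBlocks (M * N) 0 0 (1 : Matrix (Fin 1) (Fin 1) R)).submatrix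
        finSumFinEquiv.symm finSumFinEquiv.symm
      = (Matrix.fromBlocks M 0 0 (1 : Matrix (Fin 1) (Fin 1) R)).submatrix
          finSumFinEquiv.symm finSumFinEquiv.symm *
        (Matrix.fromBlocks N 0 0 (1 : Matrix (Fin 1) (Fin 1) R)).submatrix
          finSumFinEquiv.symm finSumFinEquiv.symm
    rw [Matrix.submatrix_mul_equiv _ _ _ finSumFinEquiv.symm _]

    simp [Matrix.fromBlocks_multiply]

/-- The upper-left-corner inclusion `GL_n(R) → GL_{n+1}(R)`. -/
def cornerGL (R : Type*) [Ring R] (n : ℕ) :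
    (Matrix (Fin n) (Fin n) R)ˣ →* (Matrix (Fin (n + 1)) (Fin (n + 1)) R)ˣ :=
  Units.map (cornerHom R n)

lemma fse_symm (m n : ℕ) (i : Fin (m + n)) :
    finSumFinEquiv.symm i =
      if h : (i : ℕ) < m then Sum.inl ⟨i, h⟩ else Sum.inr ⟨(i : ℕ) - m, by omega⟩ := by
  split_ifs with h
  · have : i = Fin.castAdd n ⟨(i : ℕ), h⟩ := Fin.ext rfl
    conv_lhs => rw [this]
    exact finSumFinEquiv_symm_apply_castAdd _
  · have : i = Fin.natAdd m ⟨(i : ℕ) - m, by omega⟩ := Fin.ext (by simp; omega)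
    conv_lhs => rw [this]
    exact finSumFinEquiv_symm_apply_natAdd _

def blockHom (R : Type*) [Ring R] (N k : ℕ) :
    Matrix (Fin N) (Fin N) R →* Matrix (Fin (N + k)) (Fin (N + k)) R where
  toFun M := (Matrix.fromBlocks M 0 0 (1 : Matrix (Fin k) (Fin k) R)).submatrix
    finSumFinEquiv.symm finSumFinEquiv.symm
  map_one' := by
    show (Matrix.fromBlocks (1 : Matrix (Fin N) (Fin N) R) 0 0
        (1 : Matrix (Fin k) (Fin k) R)).submatrix
      finSumFinEquiv.symm finSumFinEquiv.symm = 1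
    rw [Matrix.fromBlocks_one]
    exact Matrix.submatrix_one_equiv finSumFinEquiv.symm
  map_mul' M N := by
    show _ = _ * _
    rw [Matrix.submatrix_mul_equiv _ _ _ finSumFinEquiv.symm _]
    simp [Matrix.fromBlocks_multiply]

lemma blockHom_zero (R : Type*) [Ring R] (N : ℕ) (M : Matrix (Fin N) (Fin N) R) :
    blockHom R N 0 M = M := by
  ext i j
  simp only [blockHom, MonoidHom.coe_mk, OneHom.coe_mk, Matrix.submatrix_apply, fse_symm]
  have hi : (i : ℕ) < N := i.isLt
  have hj : (j : ℕ) < N := j.isLt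
  rw [dif_pos hi, dif_pos hj]
  simp [Matrix.fromBlocks_apply₁₁]

lemma cornerHom_blockHom (R : Type*) [Ring R] (N k : ℕ) (M : Matrix (Fin N) (Fin N) R) :
    cornerHom R (N + k) (blockHom R N k M) = blockHom R N (k + 1) M := by
  ext i j
  simp only [cornerHom, blockHom, MonoidHom.coe_mk, OneHom.coe_mk, Matrix.submatrix_apply,
    fse_symm]
  split_ifs <;>
    simp_all [fse_symm, Matrix.fromBlocks, Matrix.one_apply, Fin.ext_iff] <;>
    (try split_ifs) <;> first | rfl | omega


/-- The swap `t` in `GL_{2N}`: block matrix `[[0,1],[1,0]]`. -/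
def swapUnit (R : Type*) [Ring R] (N : ℕ) : (Matrix (Fin (N + N)) (Fin (N + N)) R)ˣ where
  val := (Matrix.fromBlocks 0 1 1 0).submatrix finSumFinEquiv.symm finSumFinEquiv.symm
  inv := (Matrix.fromBlocks 0 1 1 0).submatrix finSumFinEquiv.symm finSumFinEquiv.symm
  val_inv := by
    rw [Matrix.submatrix_mul_equiv _ _ _ finSumFinEquiv.symm _]
    rw [show (Matrix.fromBlocks (0 : Matrix (Fin N) (Fin N) R) 1 1 0) *
        Matrix.fromBlocks 0 1 1 0 = Matrix.fromBlocks 1 0 0 1 by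
      simp [Matrix.fromBlocks_multiply]]
    rw [Matrix.fromBlocks_one]
    exact Matrix.submatrix_one_equiv finSumFinEquiv.symm
  inv_val := by
    rw [Matrix.submatrix_mul_equiv _ _ _ finSumFinEquiv.symm _]
    rw [show (Matrix.fromBlocks (0 : Matrix (Fin N) (Fin N) R) 1 1 0) *
        Matrix.fromBlocks 0 1 1 0 = Matrix.fromBlocks 1 0 0 1 by
      simp [Matrix.fromBlocks_multiply]]
    rw [Matrix.fromBlocks_one]
    exact Matrix.submatrix_one_equiv finSumFinEquiv.symm

lemma swapUnit_mul_self (R : Type*) [Ring R] (N : ℕ) :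
    swapUnit R N * swapUnit R N = 1 :=
  Units.ext (swapUnit R N).val_inv

lemma swapUnit_inv (R : Type*) [Ring R] (N : ℕ) :
    (swapUnit R N)⁻¹ = swapUnit R N :=
  inv_eq_of_mul_eq_one_right (swapUnit_mul_self R N)

lemma swap_conj_comm (R : Type*) [Ring R] (N : ℕ) (a b : (Matrix (Fin N) (Fin N) R)ˣ) :
    Commute (Units.map (blockHom R N N) a)
      (swapUnit R N * Units.map (blockHom R N N) b * (swapUnit R N)⁻¹) := by
  rw [swapUnit_inv]
  unfold Commute SemiconjBy
  apply Units.ext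
  simp only [Units.val_mul, Units.coe_map, MonoidHom.coe_coe]
  simp only [swapUnit, blockHom, MonoidHom.coe_mk, OneHom.coe_mk]
  simp only [Matrix.submatrix_mul_equiv, Matrix.fromBlocks_multiply]
  simp

/-- Let `R` be a ring with identity and let `Γ` be the direct limit general linear
group `GL(R) = ⋃_{n ≥ 1} GL_n(R)` along the upper-left-corner inclusions, presented
by compatible injective homomorphisms `g n : GL_n(R) → Γ` whose ranges cover `Γ`.
Then `Γ` has commuting cyclic conjugates: every finitely generated subgroup `H`
admits `t ∈ Γ` with `t² = 1` and `[H, t H t⁻¹] = 1`. -/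
theorem GL_direct_limit_commutingCyclicConjugates
    (R : Type*) [Ring R] (Γ : Type*) [Group Γ]
    (g : ∀ n : ℕ, (Matrix (Fin n) (Fin n) R)ˣ →* Γ)
    (hinj : ∀ n, Function.Injective (g n))
    (hcompat : ∀ n, (g (n + 1)).comp (cornerGL R n) = g n)
    (hunion : ∀ x : Γ, ∃ n, x ∈ (g n).range) :
    ∀ H : Subgroup Γ, H.FG → ∃ t : Γ, t ^ 2 = 1 ∧
      ∀ h ∈ H, ∀ h' ∈ H, Commute h (t * h' * t⁻¹) := by
  -- `g` is compatible with the iterated block embeddings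
  have key : ∀ N k (A : (Matrix (Fin N) (Fin N) R)ˣ),
      g (N + k) (Units.map (blockHom R N k) A) = g N A := by
    intro N k
    induction k with
    | zero =>
      intro A
      have : Units.map (blockHom R N 0) A = A := Units.ext (blockHom_zero R N A.val)
      rw [this]
      rfl
    | succ k ih =>
      intro A
      have h1 : (Units.map (blockHom R N (k + 1)) A : _) =
          cornerGL R (N + k) (Units.map (blockHom R N k) A) :=
        Units.ext (cornerHom_blockHom R N k A.val).symm
      rw [h1]
      calc g (N + (k + 1)) (cornerGL R (N + k) (Units.map (blockHom R N k) A))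
          = ((g (N + k + 1)).comp (cornerGL R (N + k)))
              (Units.map (blockHom R N k) A) := rfl
        _ = g (N + k) (Units.map (blockHom R N k) A) := by rw [hcompat (N + k)]
        _ = g N A := ih A
  -- ranges are monotone
  have mono : ∀ m k : ℕ, (g m).range ≤ (g (m + k)).range := by
    intro m k
    induction k with
    | zero => exact le_rfl
    | succ k ih =>
      refine ih.trans ?_
      rintro x ⟨a, rfl⟩
      exact ⟨cornerGL R (m + k) a, DFunLike.congr_fun (hcompat (m + k)) a⟩
  have mono' : ∀ {m n : ℕ}, m ≤ n → (g m).range ≤ (g n).range := by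
    intro m n hmn
    obtain ⟨k, rfl⟩ := Nat.exists_eq_add_of_le hmn
    exact mono m k
  -- every finite set lies in a common range
  have cover : ∀ T : Finset Γ, ∃ N, ∀ x ∈ T, x ∈ (g N).range := by
    intro T
    classical
    induction T using Finset.induction_on with
    | empty => exact ⟨0, by simp⟩
    | @insert a T _ ih =>
      obtain ⟨N, hN⟩ := ih
      obtain ⟨m, hm⟩ := hunion a
      refine ⟨max m N, fun x hx => ?_⟩
      rcases Finset.mem_insert.1 hx with rfl | hx
      · exact mono' (le_max_left m N) hm
      · exact mono' (le_max_right m N) (hN x hx)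
  intro H hFG
  obtain ⟨S, hS⟩ := hFG
  obtain ⟨N, hN⟩ := cover S
  have hHsub : H ≤ (g N).range := by
    rw [← hS]
    exact (Subgroup.closure_le _).2 fun x hx => hN x hx
  refine ⟨g (N + N) (swapUnit R N), ?_, ?_⟩
  · rw [sq, ← map_mul, swapUnit_mul_self, map_one]
  · intro h hh h' hh'
    obtain ⟨a, ha⟩ := hHsub hh
    obtain ⟨b, hb⟩ := hHsub hh'
    have ht : (g (N + N) (swapUnit R N))⁻¹ = g (N + N) (swapUnit R N)⁻¹ :=
      (map_inv _ _).symm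
    rw [← ha, ← hb, ← key N N a, ← key N N b, ht, ← map_mul, ← map_mul]
    exact (swap_conj_comm R N a b).map (g (N + N))
end

section
/- Let H be a group, A a group, X a transitive A-set, and f : H ≀_X A → Γ a group homomorphism to some group Γ such that f restricted to the factor H at some coordinate x₀ ∈ X is injective, and f([H_x, H_{x₀}]) = 1 for all x ≠ x₀. Then K := ker(f) ∩ ⊕_{x ∈ X} H is abelian. -/
/-- The direct sum `⊕_{x ∈ X} H`: the subgroup of `X → H` consisting of functions
with finite support. -/
def finSupp (X H : Type*) [Group H] : Subgroup (X → H) where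
  carrier := {b | (Function.mulSupport b).Finite}
  one_mem' := by simp [Function.mulSupport_one]
  mul_mem' := by
    intro a b ha hb
    exact (ha.union hb).subset (Function.mulSupport_mul a b)
  inv_mem' := by
    intro a ha
    refine ha.subset fun x hx => ?_
    simpa [Function.mem_mulSupport] using hx
  
/-- The copy of `H` at coordinate `x`, i.e. the element of `⊕_{x ∈ X} H` supported
at `x` with value `h`. -/
def coordSingle {X H : Type*} [Group H] [DecidableEq X] (x : X) (h : H) :
    ↥(finSupp X H) :=
  ⟨Pi.mulSingle x h, by
    refine (Set.finite_singleton x).subset fun y hy => ?_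
    simp only [Function.mem_mulSupport] at hy
    by_contra hyx
    simp only [Set.mem_singleton_iff] at hyx
    exact hy (Pi.mulSingle_eq_of_ne (M := fun _ : X => H) hyx h)⟩

/-- The shift of a finitely supported function by a permutation `σ` of the index
set: `(σ • b) x = b (σ⁻¹ x)`.  This is how the acting group of a permutational
wreath product acts on the base. -/
def shift {X H : Type*} [Group H] (σ : Equiv.Perm X) (b : ↥(finSupp X H)) :
    ↥(finSupp X H) :=
  ⟨fun x => (b : X → H) (σ⁻¹ x), by
    refine (b.2.image σ).subset fun x hx => ?_
    exact ⟨σ⁻¹ x, hx, by simp⟩⟩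

/-- Let `H ≀_X A → Γ` be a homomorphism from a permutational wreath product
(presented by its restriction `f` to the base `⊕_{x ∈ X} H`, the map `u` on the
acting group `A`, and the equivariance relation), with `X` a transitive `A`-set.
If `f` is injective on the copy of `H` at a coordinate `x₀` and kills the
commutators `[H_x, H_{x₀}]` for all `x ≠ x₀`, then `K = ker(f) ∩ ⊕_{x ∈ X} H`
is abelian. -/
theorem wreath_kernel_abelian {X H A Γ : Type*} [Group H] [Group A] [Group Γ]
    [DecidableEq X]
    (σ : A →* Equiv.Perm X) (htrans : ∀ x y : X, ∃ a : A, σ a x = y)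
    (f : ↥(finSupp X H) →* Γ) (u : A →* Γ)
    (hequiv : ∀ (a : A) (b : ↥(finSupp X H)), f (shift (σ a) b) = u a * f b * (u a)⁻¹)
    (x₀ : X)
    (hinj : ∀ h₁ h₂ : H, f (coordSingle x₀ h₁) = f (coordSingle x₀ h₂) → h₁ = h₂)
    (hcomm : ∀ x : X, x ≠ x₀ → ∀ h h' : H,
      Commute (f (coordSingle x h)) (f (coordSingle x₀ h'))) :
    ∀ g₁ g₂ : ↥(finSupp X H), f g₁ = 1 → f g₂ = 1 → Commute g₁ g₂ := by
  classical
  -- decomposition: strip off coordinate y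
  have hdecomp : ∀ (y : X) (b : ↥(finSupp X H)),
      b = coordSingle y ((b : X → H) y) *
        ⟨Function.update (b : X → H) y 1, by
          refine b.2.subset fun z hz => ?_
          simp only [Function.mem_mulSupport] at hz ⊢
          intro h
          rcases eq_or_ne z y with rfl | hzy
          · simp at hz
          · exact hz (by simp [Function.update_of_ne hzy, h])⟩ := by
    intro y b
    apply Subtype.ext
    funext z
    rcases eq_or_ne z y with rfl | hzy
    · simp [coordSingle, Function.update_self]
    · simp [coordSingle, Function.update_of_ne hzy, Pi.mulSingle_eq_of_ne hzy]
  -- key: if b vanishes at x₀, f b commutes with every f (coordSingle x₀ h')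
  have key : ∀ (b : ↥(finSupp X H)), (b : X → H) x₀ = 1 → ∀ h' : H,
      Commute (f b) (f (coordSingle x₀ h')) := by
    have main : ∀ (s : Finset X), x₀ ∉ s → ∀ (b : ↥(finSupp X H)),
        (∀ x, (b : X → H) x ≠ 1 → x ∈ s) → ∀ h' : H,
        Commute (f b) (f (coordSingle x₀ h')) := by
      intro s
      induction s using Finset.induction_on with
      | empty =>
        intro _ b hb h'
        have hb1 : b = 1 := by
          apply Subtype.ext; funext x
          by_contra h
          exact absurd (hb x h) (Finset.notMem_empty x)
        simp [hb1, Commute, SemiconjBy]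
      | @insert y s hys ih =>
        intro hx0 b hb h'
        have hy : y ≠ x₀ := fun h => hx0 (h ▸ Finset.mem_insert_self y s)
        have hx0s : x₀ ∉ s := fun h => hx0 (Finset.mem_insert_of_mem h)
        rw [hdecomp y b, map_mul]
        refine Commute.mul_left (hcomm y hy _ h') ?_
        refine ih hx0s _ (fun x hx => ?_) h'
        simp only at hx
        rcases eq_or_ne x y with rfl | hxy
        · simp [Function.update_self] at hx
        · rw [Function.update_of_ne hxy] at hx
          exact (Finset.mem_insert.mp (hb x hx)).resolve_left hxy
    intro b hb h'
    refine main (id (α := (Function.mulSupport (b : X → H)).Finite) b.2).toFinset ?_ b (fun x hx => ?_) h'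
    · simp [Set.Finite.mem_toFinset, Function.mem_mulSupport, hb]
    · simpa [Set.Finite.mem_toFinset, Function.mem_mulSupport] using hx
  -- the x₀ case
  have hx0case : ∀ g₁ g₂ : ↥(finSupp X H), f g₁ = 1 → f g₂ = 1 →
      Commute ((g₁ : X → H) x₀) ((g₂ : X → H) x₀) := by
    intro g₁ g₂ h1 h2
    have fcs : ∀ (g : ↥(finSupp X H)), f g = 1 → ∀ h' : H,
        Commute (f (coordSingle x₀ ((g : X → H) x₀))) (f (coordSingle x₀ h')) := by
      intro g hg h'
      have hd := hdecomp x₀ g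
      set c : ↥(finSupp X H) := ⟨Function.update (g : X → H) x₀ 1, (id (α := (Function.mulSupport (g : X → H)).Finite) g.2).subset (by rw [Function.mulSupport_update_one]; exact Set.diff_subset)⟩ with hc
      have hcx0 : (c : X → H) x₀ = 1 := Function.update_self x₀ 1 _
      have : f (coordSingle x₀ ((g : X → H) x₀)) * f c = 1 := by
        rw [← map_mul, ← hd, hg]
      have heq : f (coordSingle x₀ ((g : X → H) x₀)) = (f c)⁻¹ := by
        rw [eq_inv_iff_mul_eq_one]; exact this
      rw [heq]
      exact (key c hcx0 h').inv_left
    have hcsmul : ∀ h₁ h₂ : H, coordSingle x₀ (h₁ * h₂) =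
        coordSingle x₀ h₁ * coordSingle x₀ h₂ := by
      intro h₁ h₂
      apply Subtype.ext
      simp [coordSingle, Pi.mulSingle_mul]
    have hC : Commute (f (coordSingle x₀ ((g₁ : X → H) x₀)))
        (f (coordSingle x₀ ((g₂ : X → H) x₀))) := fcs g₁ h1 _
    apply hinj
    rw [hcsmul, hcsmul, map_mul, map_mul]
    exact hC
  -- conclude via transitivity
  intro g₁ g₂ h1 h2
  show g₁ * g₂ = g₂ * g₁
  apply Subtype.ext
  funext x
  obtain ⟨a, ha⟩ := htrans x x₀
  have hx : ((σ a)⁻¹ : Equiv.Perm X) x₀ = x := by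
    rw [← ha]; exact Equiv.symm_apply_apply _ x
  have h1' : f (shift (σ a) g₁) = 1 := by rw [hequiv, h1]; group
  have h2' : f (shift (σ a) g₂) = 1 := by rw [hequiv, h2]; group
  have := hx0case (shift (σ a) g₁) (shift (σ a) g₂) h1' h2'
  simp only [shift, hx] at this
  simpa using this.eq
end

section
/- Let Γ be a group satisfying: for every finitely generated subgroup H ≤ Γ there exist a group A, an A-set X which is infinite and transitive, and a homomorphism f : H ≀_X A → Γ restricting to the inclusion of H on the factor at some coordinate x₀. Then Γ has commuting cyclic conjugates. Specifically, choosing a ∈ A with a·x₀ ≠ x₀, setting t = f(a) and n ∈ ℕ_{≥2} ∪ {∞} minimal with a^n·x₀ = x₀, one has [H, t^p H t^{-p}] = 1 for 1 ≤ p < n and [H, t^n] = 1. -/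
/-- Suppose that for a finitely generated subgroup `H ≤ Γ` there are a group `A`,
an infinite transitive `A`-set `X`, and a homomorphism `f : H ≀_X A → Γ`
(presented by its restriction `f` to the base `⊕_{x ∈ X} H`, the map `u` on the
acting group, and the equivariance relation) restricting to the inclusion of `H`
at the coordinate `x₀`.  Then the commuting-cyclic-conjugates witnesses for `H`
are obtained as follows: for any `a ∈ A` with `a · x₀ ≠ x₀`, setting `t = u a`,
one has `[H, t^p H t^{-p}] = 1` whenever `a^p · x₀ ≠ x₀` (in particular for
`1 ≤ p < n` with `n` minimal such that `a^n · x₀ = x₀`), and `[H, t^n] = 1`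
whenever `a^n · x₀ = x₀`.  Hence `Γ` has commuting cyclic conjugates. -/
theorem commutingCyclicConjugates_of_wreath {X A Γ : Type*} [Group A] [Group Γ]
    [DecidableEq X] [Infinite X]
    (σ : A →* Equiv.Perm X) (htrans : ∀ x y : X, ∃ a : A, σ a x = y)
    (H : Subgroup Γ) (hH : H.FG)
    (f : ↥(finSupp X ↥H) →* Γ) (u : A →* Γ)
    (hequiv : ∀ (a : A) (b : ↥(finSupp X ↥H)),
      f (shift (σ a) b) = u a * f b * (u a)⁻¹)
    (x₀ : X) (hincl : ∀ h : ↥H, f (coordSingle x₀ h) = (h : Γ))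
    (a : A) (ha : σ a x₀ ≠ x₀) :
    (∀ p : ℕ, 1 ≤ p → σ (a ^ p) x₀ ≠ x₀ →
      ∀ h ∈ H, ∀ h' ∈ H, Commute h ((u a) ^ p * h' * ((u a) ^ p)⁻¹)) ∧
    (∀ n : ℕ, σ (a ^ n) x₀ = x₀ → ∀ h ∈ H, Commute h ((u a) ^ n)) := by

  -- key lemma: shifting a coordinate single
  have hshift : ∀ (τ : Equiv.Perm X) (x : X) (h : ↥H),
      shift τ (coordSingle x h) = coordSingle (τ x) h := by
    intro τ x h
    apply Subtype.ext
    funext y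
    show (Pi.mulSingle x h : X → ↥H) (τ⁻¹ y) = (Pi.mulSingle (τ x) h : X → ↥H) y
    by_cases hy : y = τ x
    · subst hy; rw [Equiv.Perm.inv_def, Equiv.symm_apply_apply]; simp
    · rw [Pi.mulSingle_eq_of_ne hy, Pi.mulSingle_eq_of_ne]
      intro hc
      exact hy (by rw [← hc]; simp)
  have hconj : ∀ (b : A) (h : ↥H),
      u b * (h : Γ) * (u b)⁻¹ = f (coordSingle (σ b x₀) h) := by
    intro b h
    rw [← hincl h, ← hequiv, hshift]
  constructor
  · intro p _ hp h hh h' hh'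
    have key : Commute (f (coordSingle x₀ ⟨h, hh⟩)) (f (coordSingle (σ (a ^ p) x₀) ⟨h', hh'⟩)) := by
      apply Commute.map
      have : Commute ((Pi.mulSingle x₀ (⟨h, hh⟩ : ↥H)) : X → ↥H) ((Pi.mulSingle (σ (a ^ p) x₀) (⟨h', hh'⟩ : ↥H)) : X → ↥H) :=
        Pi.mulSingle_commute (fun hc => hp hc.symm) _ _
      exact Subtype.ext this
    rw [hincl, ← hconj] at key
    rw [map_pow] at key
    exact key
  · intro n hn h hh
    have key := hconj (a ^ n) ⟨h, hh⟩
    rw [hn, hincl, map_pow] at key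
    have key' : u a ^ n * h * (u a ^ n)⁻¹ = h := key
    have : Commute ((u a) ^ n) h := by
      rw [Commute, SemiconjBy]
      conv_rhs => rw [← key']
      group
    exact this.symm
end

section
/- Let r : Γ → Λ be a group retraction (i.e. there is a homomorphism ι : Λ → Γ with r ∘ ι = id_Λ), let E be a Banach Λ-module, and let n ≥ 1. Then the n-th vanishing modulus satisfies ‖H^n_b(Γ; r*E)‖ ≥ ‖H^n_b(Λ; E)‖. -/
open scoped BigOperators ENNReal NNReal

section

variable {Γ E : Type*} [Group Γ] [NormedAddCommGroup E] [NormedSpace ℝ E]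

/-- The simplicial coboundary operator on (homogeneous) cochains:
`(δf)(g₀, …, g_{n+1}) = Σ_i (-1)^i f(g₀, …, ĝ_i, …, g_{n+1})`. -/
def coboundary (n : ℕ) (f : (Fin (n + 1) → Γ) → E) : (Fin (n + 2) → Γ) → E :=
  fun x => ∑ i : Fin (n + 2), ((-1 : ℝ) ^ (i : ℕ)) • f (x ∘ i.succAbove)

/-- A cochain is `Γ`-invariant (for the isometric linear action `ρ`) if
`f(γg₀, …, γg_k) = ρ(γ)(f(g₀, …, g_k))`. -/
def IsInvariantCochain (ρ : Γ →* E ≃ₗᵢ[ℝ] E) {k : ℕ} (f : (Fin k → Γ) → E) : Prop :=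
  ∀ (γ : Γ) (x : Fin k → Γ), f (fun i => γ * x i) = ρ γ (f x)

/-- A cochain is bounded if its values have uniformly bounded norm. -/
def IsBoundedCochain {k : ℕ} (f : (Fin k → Γ) → E) : Prop :=
  ∃ C : ℝ, ∀ x, ‖f x‖ ≤ C

/-- The vanishing modulus `‖H^{n+1}_b(Γ; E)‖` of the bounded cohomology of `Γ` in
degree `n + 1` with coefficients in `E` (acted on by `ρ`): the least `K ∈ [0, ∞]`
such that every invariant bounded `(n+1)`-cocycle `z` has an invariant bounded
primitive `b` with `δb = z` and `‖b‖_∞ ≤ K · ‖z‖_∞` (with `inf ∅ = ∞`). -/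
noncomputable def vanishingModulus (ρ : Γ →* E ≃ₗᵢ[ℝ] E) (n : ℕ) : ℝ≥0∞ :=
  sInf {K : ℝ≥0∞ | ∀ z : (Fin (n + 2) → Γ) → E,
    IsInvariantCochain ρ z → IsBoundedCochain z → coboundary (n + 1) z = 0 →
    ∃ b : (Fin (n + 1) → Γ) → E,
      IsInvariantCochain ρ b ∧ IsBoundedCochain b ∧ coboundary n b = z ∧
      ∀ x, (‖b x‖₊ : ℝ≥0∞) ≤ K * ⨆ y, (‖z y‖₊ : ℝ≥0∞)}

end

/-- If `r : Γ → Λ` is a retraction of groups (with section `ι`) and `E` is a Banach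
`Λ`-module, then the vanishing moduli satisfy
`‖H^{n+1}_b(Γ; r*E)‖ ≥ ‖H^{n+1}_b(Λ; E)‖` (degree `n + 1 ≥ 1`). -/
theorem vanishingModulus_le_of_retraction {Γ Λ E : Type*} [Group Γ] [Group Λ]
    [NormedAddCommGroup E] [NormedSpace ℝ E] [CompleteSpace E]
    (r : Γ →* Λ) (ι : Λ →* Γ) (hretr : r.comp ι = MonoidHom.id Λ)
    (ρ : Λ →* E ≃ₗᵢ[ℝ] E) (n : ℕ) :
    vanishingModulus ρ n ≤ vanishingModulus (ρ.comp r) n := by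
  apply sInf_le_sInf
  intro K hK z hzi hzb hzc
  set z' : (Fin (n + 2) → Γ) → E := fun x => z (fun i => r (x i)) with hz'
  have hri : ∀ l : Λ, r (ι l) = l := fun l => DFunLike.congr_fun hretr l
  have hz'i : IsInvariantCochain (ρ.comp r) z' := by
    intro γ x
    simpa [z', hz', map_mul] using hzi (r γ) (fun i => r (x i))
  have hz'b : IsBoundedCochain z' := by
    obtain ⟨C, hC⟩ := hzb
    exact ⟨C, fun x => hC _⟩
  have hz'c : coboundary (n + 1) z' = 0 := by
    funext x
    have h := congrFun hzc (fun i => r (x i))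
    simpa [coboundary, z', Function.comp_def] using h
  obtain ⟨b', hb'i, hb'b, hb'c, hb'n⟩ := hK z' hz'i hz'b hz'c
  refine ⟨fun x => b' (fun i => ι (x i)), ?_, ?_, ?_, ?_⟩
  · intro l x
    have h := hb'i (ι l) (fun i => ι (x i))
    simpa [map_mul, hri] using h
  · obtain ⟨C, hC⟩ := hb'b
    exact ⟨C, fun x => hC _⟩
  · funext x
    have h := congrFun hb'c (fun i => ι (x i))
    have : coboundary n (fun x => b' (fun i => ι (x i))) x
        = coboundary n b' (fun i => ι (x i)) := by
      simp [coboundary, Function.comp_def]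
    rw [this, h]
    simp [z', hri]
  · intro x
    refine (hb'n (fun i => ι (x i))).trans ?_
    gcongr
    refine iSup_le fun y => ?_
    exact le_iSup (fun y => (‖z y‖₊ : ℝ≥0∞)) (fun i => r (y i))
end

section
/- Let Γ be a countable group acting on a countable set X, let Y be a standard Borel probability space whose measure does not concentrate on a point, and consider the generalised Bernoulli shift action of Γ on Y^X. If the action of Γ on Y^X is ergodic, then it is highly ergodic, i.e. the diagonal action on (Y^X)^n is ergodic for every n ≥ 1. -/
open MeasureTheory

open MeasurableSpace Set
open scoped symmDiff Pointwise
set_option linter.unusedSectionVars false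
set_option maxHeartbeats 1000000



namespace BernoulliAux

variable {Y : Type*} [MeasurableSpace Y]

/-- Rectangle (cylinder) sets in a product space. -/
def rect {ι : Type*} (F : Finset ι) (t : ι → Set Y) : Set (ι → Y) :=
  {f | ∀ x ∈ F, f x ∈ t x}

theorem measurableSet_rect {ι : Type*} (F : Finset ι) {t : ι → Set Y}
    (ht : ∀ x, MeasurableSet (t x)) : MeasurableSet (rect F t) := by
  have h : rect F t = ⋂ x ∈ F, (fun f : ι → Y => f x) ⁻¹' t x := by
    ext f; simp [rect]
  rw [h]
  exact MeasurableSet.biInter F.countable_toSet fun x _ => (measurable_pi_apply x) (ht x)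

/-- The collection of rectangle sets. -/
def rectSet (ι : Type*) (Y : Type*) [MeasurableSpace Y] : Set (Set (ι → Y)) :=
  {s | ∃ F : Finset ι, ∃ t : ι → Set Y, (∀ x, MeasurableSet (t x)) ∧ s = rect F t}

theorem isPiSystem_rectSet (ι : Type*) : IsPiSystem (rectSet ι Y) := by
  classical
  rintro a ⟨F, t, ht, rfl⟩ b ⟨F', t', ht', rfl⟩ -
  refine ⟨F ∪ F', fun x => (if x ∈ F then t x else univ) ∩ (if x ∈ F' then t' x else univ),
    fun x => MeasurableSet.inter (by split_ifs; exacts [ht x, .univ])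
      (by split_ifs; exacts [ht' x, .univ]), ?_⟩
  ext f
  simp only [rect, mem_inter_iff, mem_setOf_eq, Finset.mem_union]
  constructor
  · rintro ⟨h1, h2⟩ x hx
    constructor
    · split_ifs with hF
      · exact h1 x hF
      · trivial
    · split_ifs with hF'
      · exact h2 x hF'
      · trivial
  · intro h
    constructor
    · intro x hx
      have := (h x (Or.inl hx)).1
      rwa [if_pos hx] at this
    · intro x hx
      have := (h x (Or.inr hx)).2
      rwa [if_pos hx] at this

theorem generateFrom_rectSet (ι : Type*) :
    generateFrom (rectSet ι Y) = (MeasurableSpace.pi : MeasurableSpace (ι → Y)) := by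
  refine le_antisymm (generateFrom_le ?_) ?_
  · rintro s ⟨F, t, ht, rfl⟩
    exact measurableSet_rect F ht
  · refine iSup_le fun x => MeasurableSpace.comap_le_iff_le_map.2 fun s hs => ?_
    exact measurableSet_generateFrom ⟨{x}, fun _ => s, fun _ => hs, by ext f; simp [rect]⟩

theorem preimage_shift_rect {Γ ι : Type*} [Group Γ] [MulAction Γ ι] [DecidableEq ι] (γ : Γ)
    (F : Finset ι) (t : ι → Set Y) :
    (fun (f : ι → Y) => fun x => f (γ⁻¹ • x)) ⁻¹' rect F t
      = rect (F.image fun x => γ⁻¹ • x) (fun z => t (γ • z)) := by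
  classical
  ext f
  simp only [rect, mem_preimage, mem_setOf_eq, Finset.mem_image]
  constructor
  · rintro h z ⟨x, hx, rfl⟩
    rw [smul_inv_smul]
    exact h x hx
  · intro h x hx
    have := h (γ⁻¹ • x) ⟨x, hx, rfl⟩
    rwa [smul_inv_smul] at this

variable {Γ X : Type*} [Group Γ] [MulAction Γ X]

theorem map_shift (ν : Measure Y) (μ : Measure (X → Y)) [IsProbabilityMeasure μ]
    (hprod : ∀ (s : Finset X) (t : X → Set Y), (∀ x, MeasurableSet (t x)) →
      μ {f | ∀ x ∈ s, f x ∈ t x} = ∏ x ∈ s, ν (t x)) (γ : Γ) :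
    Measure.map (fun f : X → Y => fun x => f (γ⁻¹ • x)) μ = μ := by
  classical
  have hm : Measurable (fun f : X → Y => fun x => f (γ⁻¹ • x)) :=
    measurable_pi_lambda _ fun x => measurable_pi_apply _
  refine ext_of_generate_finite _ (generateFrom_rectSet X).symm (isPiSystem_rectSet X) ?_
    (by rw [Measure.map_apply hm MeasurableSet.univ]; simp)
  rintro s ⟨F, t, ht, rfl⟩
  rw [Measure.map_apply hm (measurableSet_rect F ht), preimage_shift_rect]
  have h1 : μ (rect (F.image fun x => γ⁻¹ • x) fun z => t (γ • z))
      = ∏ z ∈ F.image fun x => γ⁻¹ • x, ν (t (γ • z)) :=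
    hprod _ _ fun z => ht (γ • z)
  have h2 : μ (rect F t) = ∏ x ∈ F, ν (t x) := hprod F t ht
  rw [h1, h2, Finset.prod_image (fun x _ y _ h => by simpa using congrArg (γ • ·) h)]
  simp [smul_inv_smul]

end BernoulliAux


namespace BernoulliAux2

/-- On a countably generated space with measurable singletons, a probability measure which is
not concentrated at any point admits a set of intermediate measure. -/
theorem exists_intermediate_set {Y : Type*} [MeasurableSpace Y]
    [MeasurableSpace.CountablyGenerated Y] [MeasurableSingletonClass Y]
    (ν : Measure Y) [IsProbabilityMeasure ν] (hν : ∀ y : Y, ν {y} ≠ 1) :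
    ∃ t : Set Y, MeasurableSet t ∧ 0 < ν t ∧ ν t < 1 := by
  by_contra hcon
  push_neg at hcon
  have h01 : ∀ t : Set Y, MeasurableSet t → ν t = 0 ∨ ν t = 1 := by
    intro t ht
    rcases eq_or_lt_of_le (zero_le : 0 ≤ ν t) with h0 | h0
    · exact Or.inl h0.symm
    · exact Or.inr (le_antisymm prob_le_one (hcon t ht h0))
  classical
  set b := MeasurableSpace.countableGeneratingSet Y with hb
  have hbm : ∀ s ∈ b, MeasurableSet s := fun s hs => by
    rw [← MeasurableSpace.generateFrom_countableGeneratingSet (α := Y)]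
    exact measurableSet_generateFrom hs
  set g : Set Y → Set Y := fun s => if ν s = 1 then s else sᶜ with hg
  have hgm : ∀ s ∈ b, MeasurableSet (g s) := fun s hs => by
    simp only [hg]; split_ifs; exacts [hbm s hs, (hbm s hs).compl]
  have hg1 : ∀ s ∈ b, ν (g s) = 1 := by
    intro s hs
    simp only [hg]; split_ifs with h
    · exact h
    · rcases h01 s (hbm s hs) with h0 | h1
      · rw [prob_compl_eq_one_sub (hbm s hs), h0, tsub_zero]
      · exact absurd h1 h
  set A : Set Y := ⋂₀ (g '' b) with hA
  have hAm : MeasurableSet A :=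
    MeasurableSet.sInter ((MeasurableSpace.countable_countableGeneratingSet).image g)
      (by rintro s ⟨u, hu, rfl⟩; exact hgm u hu)
  have hA1 : ν A = 1 := by
    have hAc : ν Aᶜ = 0 := by
      rw [hA, compl_sInter, measure_sUnion_null_iff
        (((MeasurableSpace.countable_countableGeneratingSet).image g).image compl)]
      rintro s ⟨u, ⟨v, hv, rfl⟩, rfl⟩
      rw [prob_compl_eq_zero_iff (hgm v hv)]
      exact hg1 v hv
    have := prob_compl_eq_zero_iff (μ := ν) hAm
    rw [this] at hAc
    exact hAc
  obtain ⟨y, hy⟩ := nonempty_of_measure_ne_zero (by rw [hA1]; exact one_ne_zero)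
  refine hν y (le_antisymm prob_le_one ?_)
  rw [← hA1]
  refine measure_mono fun z hz => ?_
  -- z ∈ A implies z = y, since z and y agree on all generators
  have hagree : ∀ s : Set Y, MeasurableSet s → (y ∈ s ↔ z ∈ s) := by
    intro s hs
    have hle : (inferInstance : MeasurableSpace Y) ≤
        { MeasurableSet' := fun s => (y ∈ s ↔ z ∈ s)
          measurableSet_empty := Iff.rfl
          measurableSet_compl := fun s h => by simpa using h.not
          measurableSet_iUnion := fun f h => by simp only [mem_iUnion]; exact exists_congr h } := by
      rw [← MeasurableSpace.generateFrom_countableGeneratingSet (α := Y)]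
      refine MeasurableSpace.generateFrom_le fun s hs => ?_
      have hyA : y ∈ g s := hy _ ⟨s, hs, rfl⟩
      have hzA : z ∈ g s := hz _ ⟨s, hs, rfl⟩
      simp only [hg] at hyA hzA
      by_cases h : ν s = 1
      · rw [if_pos h] at hyA hzA; exact iff_of_true hyA hzA
      · rw [if_neg h] at hyA hzA; exact iff_of_false hyA hzA
    exact hle s hs
  have : z = y := by
    have := (hagree {y} (measurableSet_singleton y)).1 rfl
    simpa using this
  simp [this]

/-- B. H. Neumann style lemma: if all orbits are infinite, any finite set can be moved
completely off itself. -/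
theorem exists_smul_disjoint {Γ X : Type*} [Group Γ] [MulAction Γ X]
    (hX : ∀ x : X, (MulAction.orbit Γ x).Infinite) (B : Finset X) :
    ∃ γ : Γ, ∀ x ∈ B, ∀ y ∈ B, γ • x ≠ y := by
  classical
  by_contra hcon
  push_neg at hcon
  set P : X × X → Prop := fun p => ∃ δ : Γ, δ • p.1 = p.2 with hP
  set sF : Finset (X × X) := (B ×ˢ B).filter P with hsF
  set g : X × X → Γ := fun p => if h : P p then h.choose else 1 with hgdef
  set H : X × X → Subgroup Γ := fun p => MulAction.stabilizer Γ p.1 with hH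
  have hcover : ⋃ p ∈ sF, g p • ((H p : Subgroup Γ) : Set Γ) = Set.univ := by
    refine Set.eq_univ_of_forall fun γ => ?_
    obtain ⟨x, hx, y, hy, hxy⟩ := hcon γ
    have hPxy : P (x, y) := ⟨γ, hxy⟩
    refine Set.mem_biUnion (Finset.mem_filter.2 ⟨Finset.mem_product.2 ⟨hx, hy⟩, hPxy⟩) ?_
    rw [mem_leftCoset_iff]
    have hgxy : g (x, y) • x = y := by
      simp only [hgdef, dif_pos hPxy]
      exact hPxy.choose_spec
    show (g (x, y))⁻¹ * γ ∈ MulAction.stabilizer Γ x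
    rw [MulAction.mem_stabilizer_iff, mul_smul, hxy, inv_smul_eq_iff]
    exact hgxy.symm
  obtain ⟨k, hk, hfin⟩ := Subgroup.exists_finiteIndex_of_leftCoset_cover hcover
  haveI := hfin
  have hfin' : (MulAction.orbit Γ k.1).Finite := by
    rw [← Set.finite_coe_iff]
    exact Finite.of_equiv _ (MulAction.orbitEquivQuotientStabilizer Γ k.1).symm
  exact hX k.1 hfin'

end BernoulliAux2


namespace BernoulliAux3

variable {X Y : Type*} [MeasurableSpace Y] {n : ℕ}

/-- Rectangle sets in the `n`-fold product. -/
def rectN (F : Finset (Fin n × X)) (t : Fin n × X → Set Y) : Set (Fin n → X → Y) :=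
  {v | ∀ p ∈ F, v p.1 p.2 ∈ t p}

theorem measurableSet_rectN (F : Finset (Fin n × X)) {t : Fin n × X → Set Y}
    (ht : ∀ p, MeasurableSet (t p)) : MeasurableSet (rectN F t) := by
  have h : rectN F t = ⋂ p ∈ F, (fun v : Fin n → X → Y => v p.1 p.2) ⁻¹' t p := by
    ext v; simp [rectN]
  rw [h]
  exact MeasurableSet.biInter F.countable_toSet fun p _ =>
    ((measurable_pi_apply p.2).comp (measurable_pi_apply p.1)) (ht p)

def rectNSet (F : Finset (Fin n × X)) : Set (Set (Fin n → X → Y)) :=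
  {s | ∃ t : Fin n × X → Set Y, (∀ p, MeasurableSet (t p)) ∧ s = rectN F t}

theorem isPiSystem_rectNSet (F : Finset (Fin n × X)) :
    IsPiSystem (rectNSet (Y := Y) F) := by
  rintro a ⟨t, ht, rfl⟩ b ⟨t', ht', rfl⟩ -
  refine ⟨fun p => t p ∩ t' p, fun p => (ht p).inter (ht' p), ?_⟩
  ext v
  simp only [rectN, mem_inter_iff, mem_setOf_eq]
  constructor
  · rintro ⟨h1, h2⟩ p hp; exact ⟨h1 p hp, h2 p hp⟩
  · intro h; exact ⟨fun p hp => (h p hp).1, fun p hp => (h p hp).2⟩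

/-- The σ-algebra of sets depending only on coordinates in `F`. -/
def mcyl (F : Finset (Fin n × X)) : MeasurableSpace (Fin n → X → Y) :=
  generateFrom (rectNSet F)

theorem mcyl_le_pi (F : Finset (Fin n × X)) :
    mcyl (Y := Y) F ≤ MeasurableSpace.pi := by
  refine generateFrom_le ?_
  rintro s ⟨t, ht, rfl⟩
  exact measurableSet_rectN F ht

theorem rectN_eq_of_subset {F F' : Finset (Fin n × X)} (h : F ⊆ F') (t : Fin n × X → Set Y)
    [DecidablePred (· ∈ F)] :
    rectN F t = rectN F' fun p => if p ∈ F then t p else univ := by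
  ext v
  simp only [rectN, mem_setOf_eq]
  constructor
  · intro hv p hp
    split_ifs with hpF
    · exact hv p hpF
    · trivial
  · intro hv p hp
    have := hv p (h hp)
    rwa [if_pos hp] at this

theorem mcyl_mono {F F' : Finset (Fin n × X)} (h : F ⊆ F') :
    mcyl (Y := Y) F ≤ mcyl F' := by
  classical
  refine generateFrom_le ?_
  rintro s ⟨t, ht, rfl⟩
  refine measurableSet_generateFrom ⟨fun p => if p ∈ F then t p else univ,
    fun p => by by_cases hp : p ∈ F <;> simp [hp, ht p], rectN_eq_of_subset h t⟩

section Measure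

variable (ν : Measure Y) [IsProbabilityMeasure ν]
  (μ : Measure (X → Y)) [IsProbabilityMeasure μ]
  (hprod : ∀ (s : Finset X) (t : X → Set Y), (∀ x, MeasurableSet (t x)) →
      μ {f | ∀ x ∈ s, f x ∈ t x} = ∏ x ∈ s, ν (t x))

include hprod in
theorem rectN_measure (F : Finset (Fin n × X)) {t : Fin n × X → Set Y}
    (ht : ∀ p, MeasurableSet (t p)) :
    (Measure.pi fun _ : Fin n => μ) (rectN F t) = ∏ p ∈ F, ν (t p) := by
  classical
  have hsplit : rectN F t = Set.pi Set.univ fun i : Fin n =>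
      {f : X → Y | ∀ x ∈ (F.filter fun p => p.1 = i).image Prod.snd, f x ∈ t (i, x)} := by
    ext v
    simp only [rectN, mem_setOf_eq, Set.mem_pi, mem_univ, forall_true_left, Finset.mem_image,
      Finset.mem_filter]
    constructor
    · rintro h i x ⟨p, ⟨hpF, rfl⟩, rfl⟩
      simpa using h p hpF
    · intro h p hp
      simpa using h p.1 p.2 ⟨p, ⟨hp, rfl⟩, rfl⟩
  rw [hsplit, Measure.pi_pi]
  have hval : ∀ i : Fin n,
      μ {f : X → Y | ∀ x ∈ (F.filter fun p => p.1 = i).image Prod.snd, f x ∈ t (i, x)}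
        = ∏ x ∈ (F.filter fun p => p.1 = i).image Prod.snd, ν (t (i, x)) :=
    fun i => hprod _ _ fun x => ht (i, x)
  calc ∏ i : Fin n, μ {f : X → Y | ∀ x ∈ (F.filter fun p => p.1 = i).image Prod.snd,
        f x ∈ t (i, x)}
      = ∏ i : Fin n, ∏ x ∈ (F.filter fun p => p.1 = i).image Prod.snd, ν (t (i, x)) :=
        Finset.prod_congr rfl fun i _ => hval i
    _ = ∏ i : Fin n, ∏ p ∈ F.filter fun p => p.1 = i, ν (t p) := by
        refine Finset.prod_congr rfl fun i _ => ?_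
        rw [Finset.prod_image]
        · refine Finset.prod_congr rfl fun p hp => ?_
          obtain ⟨-, h1⟩ := Finset.mem_filter.1 hp
          rw [← h1]
        · intro p hp q hq hpq
          obtain ⟨-, h1⟩ := Finset.mem_filter.1 hp
          obtain ⟨-, h2⟩ := Finset.mem_filter.1 hq
          exact Prod.ext (h1.trans h2.symm) hpq
    _ = ∏ p ∈ F, ν (t p) :=
        Finset.prod_fiberwise_of_maps_to (fun p _ => Finset.mem_univ p.1) _

include hprod in
theorem indepSets_rectNSet {F₁ F₂ : Finset (Fin n × X)} (hd : Disjoint F₁ F₂) :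
    ProbabilityTheory.IndepSets (rectNSet (Y := Y) F₁) (rectNSet F₂)
      (Measure.pi fun _ : Fin n => μ) := by
  classical
  rw [ProbabilityTheory.IndepSets_iff]
  rintro a b ⟨t₁, ht₁, rfl⟩ ⟨t₂, ht₂, rfl⟩
  have hinter : rectN F₁ t₁ ∩ rectN F₂ t₂ = rectN (F₁ ∪ F₂)
      fun p => (if p ∈ F₁ then t₁ p else univ) ∩ (if p ∈ F₂ then t₂ p else univ) := by
    rw [rectN_eq_of_subset (Finset.subset_union_left (s₂ := F₂)) t₁,
      rectN_eq_of_subset (Finset.subset_union_right (s₁ := F₁)) t₂]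
    ext v
    simp only [rectN, mem_inter_iff, mem_setOf_eq]
    constructor
    · rintro ⟨h1, h2⟩ p hp; exact ⟨h1 p hp, h2 p hp⟩
    · intro h; exact ⟨fun p hp => (h p hp).1, fun p hp => (h p hp).2⟩
  have hmeas : ∀ p : Fin n × X,
      MeasurableSet ((if p ∈ F₁ then t₁ p else univ) ∩ (if p ∈ F₂ then t₂ p else univ)) :=
    fun p => MeasurableSet.inter (by by_cases hp : p ∈ F₁ <;> simp [hp, ht₁ p])
      (by by_cases hp : p ∈ F₂ <;> simp [hp, ht₂ p])
  rw [hinter, rectN_measure ν μ hprod _ hmeas, rectN_measure ν μ hprod _ ht₁,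
    rectN_measure ν μ hprod _ ht₂, Finset.prod_union hd]
  congr 1
  · refine Finset.prod_congr rfl fun p hp => ?_
    rw [if_pos hp, if_neg (Finset.disjoint_left.1 hd hp), inter_univ]
  · refine Finset.prod_congr rfl fun p hp => ?_
    rw [if_neg (Finset.disjoint_right.1 hd hp), if_pos hp, univ_inter]

include hprod in
theorem indep_mcyl {F₁ F₂ : Finset (Fin n × X)} (hd : Disjoint F₁ F₂) :
    ProbabilityTheory.Indep (mcyl (Y := Y) F₁) (mcyl F₂) (Measure.pi fun _ : Fin n => μ) :=
  ProbabilityTheory.IndepSets.indep (mcyl_le_pi F₁) (mcyl_le_pi F₂)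
    (isPiSystem_rectNSet F₁) (isPiSystem_rectNSet F₂) rfl rfl
    (indepSets_rectNSet ν μ hprod hd)

end Measure

/-- The algebra of sets depending on finitely many coordinates. -/
def cylAlgebra (n : ℕ) (X Y : Type*) [MeasurableSpace Y] : Set (Set (Fin n → X → Y)) :=
  {s | ∃ F : Finset (Fin n × X), MeasurableSet[mcyl F] s}

theorem isSetAlgebra_cylAlgebra : IsSetAlgebra (cylAlgebra n X Y) := by
  classical
  refine ⟨⟨∅, @MeasurableSet.empty _ (mcyl ∅)⟩, ?_, ?_⟩
  · rintro s ⟨F, hF⟩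
    exact ⟨F, hF.compl⟩
  · rintro s t ⟨F₁, h1⟩ ⟨F₂, h2⟩
    exact ⟨F₁ ∪ F₂, MeasurableSet.union
      (mcyl_mono Finset.subset_union_left _ h1)
      (mcyl_mono Finset.subset_union_right _ h2)⟩

theorem generateFrom_cylAlgebra :
    generateFrom (cylAlgebra n X Y) = (MeasurableSpace.pi :
      MeasurableSpace (Fin n → X → Y)) := by
  refine le_antisymm (generateFrom_le ?_) ?_
  · rintro s ⟨F, hF⟩
    exact mcyl_le_pi F _ hF
  · refine iSup_le fun i => MeasurableSpace.comap_le_iff_le_map.2 ?_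
    refine iSup_le fun x => MeasurableSpace.comap_le_iff_le_map.2 fun u hu => ?_
    refine measurableSet_generateFrom ⟨{(i, x)}, measurableSet_generateFrom
      ⟨fun _ => u, fun _ => hu, ?_⟩⟩
    ext v
    simp [rectN]

section Shift

variable {Γ : Type*} [Group Γ] [MulAction Γ X] [DecidableEq X]

theorem measurable_actN (γ : Γ) :
    Measurable (fun v : Fin n → X → Y => fun i x => v i (γ⁻¹ • x)) :=
  measurable_pi_lambda _ fun i => measurable_pi_lambda _ fun x =>
    (measurable_pi_apply _).comp (measurable_pi_apply i)

theorem map_actN (ν : Measure Y) [IsProbabilityMeasure ν]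
    (μ : Measure (X → Y)) [IsProbabilityMeasure μ]
    (hprod : ∀ (s : Finset X) (t : X → Set Y), (∀ x, MeasurableSet (t x)) →
      μ {f | ∀ x ∈ s, f x ∈ t x} = ∏ x ∈ s, ν (t x)) (γ : Γ) :
    Measure.map (fun v : Fin n → X → Y => fun i x => v i (γ⁻¹ • x))
      (Measure.pi fun _ : Fin n => μ) = Measure.pi fun _ : Fin n => μ := by
  have hm1 : Measurable (fun f : X → Y => fun x => f (γ⁻¹ • x)) :=
    measurable_pi_lambda _ fun x => measurable_pi_apply _
  refine (Measure.pi_eq (μ := fun _ : Fin n => μ) fun g hg => ?_).symm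
  rw [Measure.map_apply (measurable_actN γ) (MeasurableSet.univ_pi hg)]
  have hpre : (fun v : Fin n → X → Y => fun i x => v i (γ⁻¹ • x)) ⁻¹' Set.pi univ g
      = Set.pi univ fun i => (fun f : X → Y => fun x => f (γ⁻¹ • x)) ⁻¹' g i := by
    ext v; simp [Set.mem_pi]
  rw [hpre, Measure.pi_pi]
  refine Finset.prod_congr rfl fun i _ => ?_
  rw [← Measure.map_apply hm1 (hg i), BernoulliAux.map_shift ν μ hprod γ]

theorem actN_preimage_mcyl (γ : Γ) (F : Finset (Fin n × X)) {s : Set (Fin n → X → Y)}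
    (hs : MeasurableSet[mcyl F] s) :
    MeasurableSet[mcyl (Finset.image (fun p : Fin n × X => (p.1, γ⁻¹ • p.2)) F)]
      ((fun v : Fin n → X → Y => fun i x => v i (γ⁻¹ • x)) ⁻¹' s) := by
  classical
  revert s
  suffices h : mcyl (Y := Y) F ≤ MeasurableSpace.map
      (fun v : Fin n → X → Y => fun i x => v i (γ⁻¹ • x))
      (mcyl (Finset.image (fun p : Fin n × X => (p.1, γ⁻¹ • p.2)) F)) by
    intro s hs
    exact h _ hs
  refine generateFrom_le ?_
  rintro s ⟨t, ht, rfl⟩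
  show MeasurableSet[mcyl _] ((fun v : Fin n → X → Y => fun i x => v i (γ⁻¹ • x)) ⁻¹' rectN F t)
  have hpre : (fun v : Fin n → X → Y => fun i x => v i (γ⁻¹ • x)) ⁻¹' rectN F t
      = rectN (Finset.image (fun p : Fin n × X => (p.1, γ⁻¹ • p.2)) F)
        fun q => t (q.1, γ • q.2) := by
    ext v
    simp only [rectN, mem_preimage, mem_setOf_eq, Finset.mem_image]
    constructor
    · rintro h q ⟨p, hp, rfl⟩
      simpa [smul_inv_smul] using h p hp
    · intro h p hp
      simpa [smul_inv_smul] using h (p.1, γ⁻¹ • p.2) ⟨p, hp, rfl⟩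
  rw [hpre]
  exact measurableSet_generateFrom ⟨_, fun q => ht _, rfl⟩

end Shift

theorem measureDense_cylAlgebra (μ : Measure (X → Y)) [IsProbabilityMeasure μ] :
    (Measure.pi fun _ : Fin n => μ).MeasureDense (cylAlgebra n X Y) :=
  Measure.MeasureDense.of_generateFrom_isSetAlgebra_finite _
    isSetAlgebra_cylAlgebra generateFrom_cylAlgebra.symm

end BernoulliAux3



/-- A (non-singular) action of a group `G` on a measure space is *ergodic* if every
measurable invariant set has measure `0` or full measure (here for a probability
measure, measure `1`). -/
def IsErgodicAction {G α : Type*} [Group G] [MeasurableSpace α]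
    (act : G → α → α) (μ : Measure α) : Prop :=
  ∀ s : Set α, MeasurableSet s → (∀ g : G, act g ⁻¹' s = s) → μ s = 0 ∨ μ s = 1

/-- Let `Γ` be a countable group acting on a countable set `X`, `Y` a standard Borel
probability space whose measure `ν` does not concentrate on a single point, and
`μ` the product measure on `Y^X` (characterized by its values on cylinder sets).
If the generalised Bernoulli shift action of `Γ` on `Y^X` is ergodic, then it is
highly ergodic: the diagonal action on `(Y^X)^n` is ergodic for all `n ≥ 1`. -/
theorem bernoulli_ergodic_implies_highly_ergodic
    {Γ X Y : Type*} [Group Γ] [Countable Γ] [Countable X] [MulAction Γ X]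
    [MeasurableSpace Y] [StandardBorelSpace Y]
    (ν : Measure Y) [IsProbabilityMeasure ν]
    (hν : ∀ y : Y, ν {y} ≠ 1)
    (μ : Measure (X → Y)) [IsProbabilityMeasure μ]
    (hprod : ∀ (s : Finset X) (t : X → Set Y), (∀ x, MeasurableSet (t x)) →
      μ {f | ∀ x ∈ s, f x ∈ t x} = ∏ x ∈ s, ν (t x))
    (herg : IsErgodicAction (fun (γ : Γ) (f : X → Y) => fun x => f (γ⁻¹ • x)) μ) :
    ∀ n : ℕ, 1 ≤ n →
      IsErgodicAction (fun (γ : Γ) (v : Fin n → X → Y) => fun i x => v i (γ⁻¹ • x))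
        (Measure.pi fun _ : Fin n => μ) := by
  classical
  intro n _hn s hs hinv
  set M : Measure (Fin n → X → Y) := Measure.pi fun _ : Fin n => μ with hMdef
  haveI : IsProbabilityMeasure M := by
    rw [hMdef]; infer_instance
  -- Step A: every orbit is infinite
  obtain ⟨t0, ht0, h0pos, h0lt⟩ := BernoulliAux2.exists_intermediate_set ν hν
  have horb : ∀ x : X, (MulAction.orbit Γ x).Infinite := by
    intro x
    by_contra hfin
    rw [Set.not_infinite] at hfin
    set O : Finset X := hfin.toFinset with hO
    have hOx : x ∈ O := hfin.mem_toFinset.2 (MulAction.mem_orbit_self x)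
    have hOcard : O.card ≠ 0 := Finset.card_ne_zero_of_mem hOx
    have hsmul : ∀ γ : Γ, O.image (fun z => γ⁻¹ • z) = O := by
      intro γ
      ext z
      simp only [Finset.mem_image, hO, Set.Finite.mem_toFinset]
      constructor
      · rintro ⟨w, hw, rfl⟩
        obtain ⟨δ, rfl⟩ := MulAction.mem_orbit_iff.1 hw
        exact MulAction.mem_orbit_iff.2 ⟨γ⁻¹ * δ, mul_smul _ _ _⟩
      · intro hz
        refine ⟨γ • z, ?_, inv_smul_smul γ z⟩
        obtain ⟨δ, rfl⟩ := MulAction.mem_orbit_iff.1 hz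
        exact MulAction.mem_orbit_iff.2 ⟨γ * δ, mul_smul _ _ _⟩
    have hSmeas : MeasurableSet (BernoulliAux.rect O fun _ => t0) :=
      BernoulliAux.measurableSet_rect O fun _ => ht0
    have hSinv : ∀ γ : Γ,
        (fun f : X → Y => fun x => f (γ⁻¹ • x)) ⁻¹' (BernoulliAux.rect O fun _ => t0)
          = BernoulliAux.rect O fun _ => t0 := by
      intro γ
      rw [BernoulliAux.preimage_shift_rect, hsmul]
    have hval : μ (BernoulliAux.rect O fun _ => t0) = ν t0 ^ O.card := by
      have h := hprod O (fun _ => t0) fun _ => ht0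
      simpa [Finset.prod_const, BernoulliAux.rect] using h
    rcases herg _ hSmeas hSinv with h | h
    · rw [hval] at h
      exact absurd ((pow_eq_zero_iff hOcard).1 h) h0pos.ne'
    · rw [hval] at h
      obtain ⟨m, hm⟩ := Nat.exists_eq_succ_of_ne_zero hOcard
      have hle : ν t0 ^ O.card ≤ ν t0 := by
        rw [hm, pow_succ]
        calc ν t0 ^ m * ν t0 ≤ 1 * ν t0 := mul_le_mul_left (pow_le_one' h0lt.le m) _
          _ = ν t0 := one_mul _
      rw [h] at hle
      exact absurd (lt_of_le_of_lt hle h0lt) (lt_irrefl 1)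
  -- main estimate
  have hdense := BernoulliAux3.measureDense_cylAlgebra (n := n) (X := X) μ
  have key : ∀ ε : ℝ, 0 < ε →
      |(M s).toReal - (M s).toReal * (M s).toReal| ≤ 4 * ε := by
    intro ε hε
    obtain ⟨C, hC𝒜, hCap⟩ := hdense.approx s hs (measure_ne_top M s) ε hε
    obtain ⟨F, hCF⟩ := hC𝒜
    set B : Finset X := F.image Prod.snd with hB
    obtain ⟨γ₀, hγ₀⟩ := BernoulliAux2.exists_smul_disjoint horb B
    set γ : Γ := γ₀⁻¹ with hγ
    set F' : Finset (Fin n × X) := F.image (fun p => (p.1, γ⁻¹ • p.2)) with hF'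
    have hdisj : Disjoint F F' := by
      rw [Finset.disjoint_right]
      intro p hpF' hpF
      obtain ⟨q, hqF, rfl⟩ := Finset.mem_image.1 hpF'
      exact hγ₀ q.2 (Finset.mem_image_of_mem Prod.snd hqF) (γ⁻¹ • q.2)
        (Finset.mem_image_of_mem Prod.snd hpF) (by rw [hγ, inv_inv])
    have hCm : MeasurableSet C := BernoulliAux3.mcyl_le_pi F _ hCF
    set D : Set (Fin n → X → Y) :=
      (fun v : Fin n → X → Y => fun i x => v i (γ⁻¹ • x)) ⁻¹' C with hD
    have hDmc : MeasurableSet[BernoulliAux3.mcyl F'] D :=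
      BernoulliAux3.actN_preimage_mcyl γ F hCF
    have hDm : MeasurableSet D := BernoulliAux3.mcyl_le_pi F' _ hDmc
    have hmap := BernoulliAux3.map_actN (n := n) ν μ hprod γ
    have hMD : M D = M C := by
      rw [hD, hMdef, ← Measure.map_apply (BernoulliAux3.measurable_actN γ) hCm, hmap]
    have hCD : M (C ∩ D) = M C * M C := by
      have hindep := BernoulliAux3.indep_mcyl ν μ hprod hdisj
      have h := (ProbabilityTheory.Indep_iff _ _ _).1 hindep C D hCF hDmc
      rw [hMdef, h, ← hMdef, hMD]
    have hsCm : MeasurableSet (s ∆ C) := by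
      rw [Set.symmDiff_def]
      exact (hs.diff hCm).union (hCm.diff hs)
    have hsymmD : M (s ∆ D) = M (s ∆ C) := by
      have hpre : s ∆ D = (fun v : Fin n → X → Y => fun i x => v i (γ⁻¹ • x)) ⁻¹' (s ∆ C) := by
        rw [Set.symmDiff_def, Set.symmDiff_def, Set.preimage_union, Set.preimage_diff,
          Set.preimage_diff, hD]
        rw [show (fun v : Fin n → X → Y => fun i x => v i (γ⁻¹ • x)) ⁻¹' s = s from hinv γ]
      rw [hpre, hMdef, ← Measure.map_apply (BernoulliAux3.measurable_actN γ) hsCm, hmap]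
    have hsub : s ∆ (C ∩ D) ⊆ (s ∆ C) ∪ (s ∆ D) := by
      intro v hv
      simp only [Set.mem_symmDiff, Set.mem_union, Set.mem_inter_iff] at hv ⊢
      tauto
    have h1 : M (s ∆ (C ∩ D)) ≤ M (s ∆ C) + M (s ∆ D) :=
      le_trans (measure_mono hsub) (measure_union_le _ _)
    have hfin : ∀ A : Set (Fin n → X → Y), M A ≠ ⊤ := fun A => measure_ne_top M A
    have hlt1 : (M (s ∆ C)).toReal < ε :=
      (ENNReal.lt_ofReal_iff_toReal_lt (hfin _)).1 hCap
    have e1 : |(M s).toReal - (M (C ∩ D)).toReal| ≤ (M (s ∆ (C ∩ D))).toReal :=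
      abs_measureReal_sub_le_measureReal_symmDiff hs.nullMeasurableSet
        (hCm.inter hDm).nullMeasurableSet
    have e2 : (M (s ∆ (C ∩ D))).toReal ≤ (M (s ∆ C)).toReal + (M (s ∆ D)).toReal := by
      rw [← ENNReal.toReal_add (hfin _) (hfin _)]
      exact ENNReal.toReal_mono (by simp [ENNReal.add_ne_top, hfin]) h1
    have e3 : |(M s).toReal - (M C).toReal| ≤ (M (s ∆ C)).toReal :=
      abs_measureReal_sub_le_measureReal_symmDiff hs.nullMeasurableSet hCm.nullMeasurableSet
    have hCDr : (M (C ∩ D)).toReal = (M C).toReal * (M C).toReal := by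
      rw [hCD, ENNReal.toReal_mul]
    have hb : ∀ A : Set (Fin n → X → Y), (M A).toReal ≤ 1 := fun A => by
      simpa using ENNReal.toReal_mono ENNReal.one_ne_top (prob_le_one (μ := M) (s := A))
    have hsymmDr : (M (s ∆ D)).toReal = (M (s ∆ C)).toReal := by rw [hsymmD]
    set a := (M s).toReal with hadef
    set c := (M C).toReal with hcdef
    have ha0 : 0 ≤ a := ENNReal.toReal_nonneg
    have hc0 : 0 ≤ c := ENNReal.toReal_nonneg
    have ha1 : a ≤ 1 := hb s
    have hc1 : c ≤ 1 := hb C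
    have habs : |a - a * a| ≤ |a - c * c| + |c * c - a * a| := abs_sub_le _ _ _
    have h2 : |a - c * c| ≤ 2 * ε := by
      rw [← hCDr]
      calc |a - (M (C ∩ D)).toReal| ≤ (M (s ∆ (C ∩ D))).toReal := e1
        _ ≤ (M (s ∆ C)).toReal + (M (s ∆ D)).toReal := e2
        _ ≤ 2 * ε := by rw [hsymmDr]; linarith
    have h3 : |c * c - a * a| ≤ 2 * ε := by
      have hca : |c - a| ≤ ε := by
        rw [abs_sub_comm]
        linarith [e3, hlt1]
      have hfact : c * c - a * a = (c - a) * (c + a) := by ring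
      rw [hfact, abs_mul]
      have h4 : |c + a| ≤ 2 := by
        rw [abs_of_nonneg (by linarith)]
        linarith
      nlinarith [abs_nonneg (c - a)]
    linarith
  have haa : (M s).toReal = (M s).toReal * (M s).toReal := by
    by_contra hne
    have hpos : 0 < |(M s).toReal - (M s).toReal * (M s).toReal| :=
      abs_pos.2 (sub_ne_zero.2 hne)
    have h := key (|(M s).toReal - (M s).toReal * (M s).toReal| / 8) (by linarith)
    linarith
  have h01 : (M s).toReal = 0 ∨ (M s).toReal = 1 := by
    have hz : (M s).toReal * (1 - (M s).toReal) = 0 := by nlinarith [haa]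
    rcases mul_eq_zero.1 hz with h | h
    · exact Or.inl h
    · right; linarith
  rcases h01 with h | h
  · left
    rw [← ENNReal.ofReal_toReal (measure_ne_top M s), h, ENNReal.ofReal_zero]
  · right
    rw [← ENNReal.ofReal_toReal (measure_ne_top M s), h, ENNReal.ofReal_one]
end

section
/- The group IET([0,∞)) has commuting cyclic conjugates: for every finitely generated subgroup H ≤ IET([0,∞)) there exists n ≥ 1 with H ≤ IET([0,n)) (identified with its image), and the interval exchange transformation t swapping [0,n) and [n,2n) by translation satisfies tHt^{-1} ≤ IET([n,2n)), hence [H, tHt^{-1}] = 1, and t² = id. -/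
/-- The half line `[0, ∞)`. -/
abbrev HalfLine : Type := {x : ℝ // 0 ≤ x}

/-- An interval exchange transformation of the half line `[0, ∞)`: a bijection of
`[0, ∞)` obtained by cutting `[0, ∞)` at finitely many points
`0 = a₀ < a₁ < ⋯ < a_k` and translating each half-open piece `[a_i, a_{i+1})`
(and the unbounded piece `[a_k, ∞)`) by some constant. -/
def IsIET (f : Equiv.Perm HalfLine) : Prop :=
  ∃ (k : ℕ) (a : Fin (k + 1) → ℝ) (d : Fin (k + 1) → ℝ), a 0 = 0 ∧ StrictMono a ∧
    (∀ i : Fin k, ∀ x : HalfLine, a i.castSucc ≤ (x : ℝ) → (x : ℝ) < a i.succ →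
      (f x : ℝ) = (x : ℝ) + d i.castSucc) ∧
    (∀ x : HalfLine, a (Fin.last k) ≤ (x : ℝ) →
      (f x : ℝ) = (x : ℝ) + d (Fin.last k))

/-- Any point of `[0, a_k)` lies in some piece `[a_i, a_{i+1})`. -/
lemma iet_exists_piece (k : ℕ) (a : Fin (k + 1) → ℝ) (h0 : a 0 = 0) (hm : StrictMono a)
    {r : ℝ} (hr0 : 0 ≤ r) (hr : r < a (Fin.last k)) :
    ∃ i : Fin k, a i.castSucc ≤ r ∧ r < a i.succ := by
  classical
  set s : Finset (Fin (k + 1)) := Finset.univ.filter (fun i => a i ≤ r) with hs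
  have h0s : (0 : Fin (k + 1)) ∈ s := by
    simp [hs, h0, hr0]
  have hne : s.Nonempty := ⟨0, h0s⟩
  set i₀ := s.max' hne with hi₀
  have hi₀mem : i₀ ∈ s := s.max'_mem hne
  have hi₀le : a i₀ ≤ r := by
    have := hi₀mem; simp [hs] at this; exact this
  have hi₀ne : i₀ ≠ Fin.last k := by
    intro h
    rw [h] at hi₀le; linarith
  have hval : (i₀ : ℕ) < k := by
    have := i₀.isLt
    have : (i₀ : ℕ) ≠ k := fun h => hi₀ne (Fin.ext h)
    omega
  refine ⟨⟨i₀, hval⟩, ?_, ?_⟩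
  · have : (⟨i₀, hval⟩ : Fin k).castSucc = i₀ := Fin.ext rfl
    rw [this]; exact hi₀le
  · by_contra h
    push_neg at h
    have hmem : (⟨i₀, hval⟩ : Fin k).succ ∈ s := by
      simp only [hs, Finset.mem_filter, Finset.mem_univ, true_and]; exact h
    have := s.le_max' _ hmem
    rw [← hi₀] at this
    have hlt : i₀ < (⟨i₀, hval⟩ : Fin k).succ := by
      rw [Fin.lt_def]; simp
    exact absurd this (not_le.mpr hlt)

/-- Telescoping sum over the pieces. -/
lemma fin_telescope : ∀ {k : ℕ} (a : Fin (k + 1) → ℝ),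
    ∑ i : Fin k, (a i.succ - a i.castSucc) = a (Fin.last k) - a 0 := by
  intro k
  induction k with
  | zero => intro a; simp
  | succ k ih =>
    intro a
    rw [Fin.sum_univ_castSucc]
    have h := ih (fun i : Fin (k + 1) => a i.castSucc)
    simp only [Fin.succ_castSucc] at h ⊢
    rw [h]
    simp only [Fin.castSucc_zero, Fin.succ_last]
    ring

/-- The translation constant on the unbounded piece of an IET is `0`. -/
lemma iet_last_d_eq_zero (f : Equiv.Perm HalfLine) (k : ℕ) (a d : Fin (k + 1) → ℝ)
    (h0 : a 0 = 0) (hm : StrictMono a)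
    (hmid : ∀ i : Fin k, ∀ x : HalfLine, a i.castSucc ≤ (x : ℝ) → (x : ℝ) < a i.succ →
      (f x : ℝ) = (x : ℝ) + d i.castSucc)
    (hlast : ∀ x : HalfLine, a (Fin.last k) ≤ (x : ℝ) →
      (f x : ℝ) = (x : ℝ) + d (Fin.last k)) :
    d (Fin.last k) = 0 := by
  classical
  set L := a (Fin.last k) with hLdef
  set D := d (Fin.last k) with hDdef
  have hL0 : 0 ≤ L := by
    have := hm.monotone (Fin.zero_le (Fin.last k))
    rw [h0] at this; exact this
  have hLD : 0 ≤ L + D := by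
    have h := hlast ⟨L, hL0⟩ (le_refl L)
    have := (f ⟨L, hL0⟩).2
    simp only at h
    linarith [h ▸ this]
  -- nonnegativity of each piece's left endpoint
  have ha0 : ∀ i : Fin k, 0 ≤ a i.castSucc := fun i => by
    have := hm.monotone (Fin.zero_le i.castSucc)
    rw [h0] at this; exact this
  set T : Fin k → Set ℝ :=
    fun i => Set.Ico (a i.castSucc + d i.castSucc) (a i.succ + d i.castSucc) with hT
  -- every point of `T i` is the image of a point of the piece `i`
  have hpre : ∀ (i : Fin k) (y : ℝ), y ∈ T i →
      ∃ x : HalfLine, a i.castSucc ≤ (x : ℝ) ∧ (x : ℝ) < a i.succ ∧ (f x : ℝ) = y := by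
    intro i y hy
    obtain ⟨hy1, hy2⟩ := hy
    have hx0 : (0 : ℝ) ≤ y - d i.castSucc := by
      have := ha0 i; linarith
    refine ⟨⟨y - d i.castSucc, hx0⟩, by simpa using (by linarith : a i.castSucc ≤ y - d i.castSucc),
      by simpa using (by linarith : y - d i.castSucc < a i.succ), ?_⟩
    have := hmid i ⟨y - d i.castSucc, hx0⟩ (by simpa using (by linarith : a i.castSucc ≤ y - d i.castSucc))
      (by simpa using (by linarith : y - d i.castSucc < a i.succ))
    rw [this]; ring
  have hsuccle : ∀ i : Fin k, a i.succ ≤ L := fun i => hm.monotone (Fin.le_last _)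
  -- the sets `T i` are pairwise disjoint
  have hdisj : Pairwise (Function.onFun Disjoint T) := by
    intro i j hij
    rw [Function.onFun, Set.disjoint_left]
    intro y hyi hyj
    obtain ⟨xi, hxi1, hxi2, hxi3⟩ := hpre i y hyi
    obtain ⟨xj, hxj1, hxj2, hxj3⟩ := hpre j y hyj
    have hx : xi = xj := f.injective (Subtype.ext (by rw [hxi3, hxj3]))
    rw [hx] at hxi1 hxi2
    rcases hij.lt_or_gt with h | h
    · have : (i.succ : Fin (k + 1)) ≤ j.castSucc := by
        have hv : (i : ℕ) < (j : ℕ) := Fin.lt_def.mp h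
        rw [Fin.le_def, Fin.val_succ, Fin.coe_castSucc]; omega
      have := hm.monotone this
      linarith
    · have : (j.succ : Fin (k + 1)) ≤ i.castSucc := by
        have hv : (j : ℕ) < (i : ℕ) := Fin.lt_def.mp h
        rw [Fin.le_def, Fin.val_succ, Fin.coe_castSucc]; omega
      have := hm.monotone this
      linarith
  -- the union of the `T i` is `[0, L + D)`
  have hU : (⋃ i, T i) = Set.Ico 0 (L + D) := by
    ext y
    constructor
    · intro hy
      rw [Set.mem_iUnion] at hy
      obtain ⟨i, hyi⟩ := hy
      obtain ⟨x, hx1, hx2, hx3⟩ := hpre i y hyi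
      have hy0 : 0 ≤ y := hx3 ▸ (f x).2
      refine ⟨hy0, ?_⟩
      by_contra hcon
      push_neg at hcon
      have hz0 : (0 : ℝ) ≤ y - D := by linarith
      have hzL : L ≤ y - D := by linarith
      have hz := hlast ⟨y - D, hz0⟩ (by simpa using hzL)
      have : (f ⟨y - D, hz0⟩ : ℝ) = y := by rw [hz]; ring
      have hxz : x = ⟨y - D, hz0⟩ := f.injective (Subtype.ext (by rw [hx3, this]))
      have : (x : ℝ) = y - D := by rw [hxz]
      have := hsuccle i
      linarith
    · intro ⟨hy0, hyL⟩
      set x := f.symm ⟨y, hy0⟩ with hxdef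
      have hfx : f x = ⟨y, hy0⟩ := f.apply_symm_apply _
      have hxL : (x : ℝ) < L := by
        by_contra h
        push_neg at h
        have := hlast x h
        rw [hfx] at this
        simp only at this
        linarith
      obtain ⟨i, hi1, hi2⟩ := iet_exists_piece k a h0 hm x.2 hxL
      have := hmid i x hi1 hi2
      rw [hfx] at this
      simp only at this
      rw [Set.mem_iUnion]
      exact ⟨i, by constructor <;> [linarith; linarith]⟩
  -- measure computation
  have hvol : MeasureTheory.volume (⋃ i, T i) = ∑' i, MeasureTheory.volume (T i) :=
    MeasureTheory.measure_iUnion hdisj (fun i => measurableSet_Ico)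
  rw [hU, Real.volume_Ico, tsum_fintype] at hvol
  have hterm : ∀ i : Fin k, MeasureTheory.volume (T i)
      = ENNReal.ofReal (a i.succ - a i.castSucc) := by
    intro i
    rw [hT]
    simp only
    rw [Real.volume_Ico]
    congr 1
    ring
  rw [Finset.sum_congr rfl (fun i _ => hterm i)] at hvol
  rw [← ENNReal.ofReal_sum_of_nonneg (fun i _ => by
    have := (hm (Fin.castSucc_lt_succ (i := i))).le; linarith)] at hvol
  -- telescoping sum
  have hsum : ∑ i : Fin k, (a i.succ - a i.castSucc) = L := by
    rw [fin_telescope a, h0, sub_zero]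
  rw [hsum] at hvol
  have : L + D - 0 = L := by
    rw [ENNReal.ofReal_eq_ofReal_iff (by linarith) hL0] at hvol
    exact hvol
  linarith

/-- Every IET is eventually the identity. -/
lemma IsIET.eventually_id {f : Equiv.Perm HalfLine} (hf : IsIET f) :
    ∃ C : ℝ, ∀ x : HalfLine, C ≤ (x : ℝ) → f x = x := by
  obtain ⟨k, a, d, h0, hm, hmid, hlast⟩ := hf
  refine ⟨a (Fin.last k), fun x hx => ?_⟩
  have := hlast x hx
  rw [iet_last_d_eq_zero f k a d h0 hm hmid hlast] at this
  exact Subtype.ext (by rw [this, add_zero])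

/-- Two permutations commute if one fixes a set pointwise and the other fixes
its complement pointwise. -/
lemma commute_of_fixes {X : Type*} (h g : Equiv.Perm X) (P : X → Prop)
    (hh : ∀ x, ¬ P x → h x = x) (hg : ∀ x, P x → g x = x) : Commute h g := by
  have hP : ∀ x, P x → P (h x) := by
    intro x hx
    by_contra hc
    have := h.injective (hh (h x) hc)
    rw [this] at hc
    exact hc hx
  have hQ : ∀ x, ¬ P x → ¬ P (g x) := by
    intro x hx hc
    have := g.injective (hg (g x) hc)
    rw [this] at hc
    exact hx hc
  apply Equiv.ext
  intro x
  simp only [Equiv.Perm.mul_apply]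
  by_cases hx : P x
  · rw [hg x hx, hg (h x) (hP x hx)]
  · rw [hh x hx, hh (g x) (hQ x hx)]

/-- The involution of the half line swapping `[0, c)` and `[c, 2c)` by translation. -/
noncomputable def swapMap (c : ℝ) : HalfLine → HalfLine := fun x =>
  if h : (x : ℝ) < c then ⟨(x : ℝ) + c, by have := x.2; linarith⟩
  else if h2 : (x : ℝ) < 2 * c then ⟨(x : ℝ) - c, by push_neg at h; linarith⟩
  else x

lemma swapMap_invol (c : ℝ) (hc : 0 < c) : Function.Involutive (swapMap c) := by
  intro x
  have hx0 := x.2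
  unfold swapMap
  by_cases h1 : (x : ℝ) < c
  · rw [dif_pos h1]
    have : ¬ ((x : ℝ) + c < c) := by push_neg; linarith
    rw [dif_neg this]
    have : (x : ℝ) + c < 2 * c := by linarith
    rw [dif_pos this]
    apply Subtype.ext; simp
  · rw [dif_neg h1]
    push_neg at h1
    by_cases h2 : (x : ℝ) < 2 * c
    · rw [dif_pos h2]
      have : (x : ℝ) - c < c := by linarith
      rw [dif_pos this]
      apply Subtype.ext; simp
    · rw [dif_neg h2]
      rw [dif_neg h1.not_gt, dif_neg h2]

lemma swapMap_coe_low {c : ℝ} {x : HalfLine} (h : (x : ℝ) < c) :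
    ((swapMap c x : HalfLine) : ℝ) = (x : ℝ) + c := by
  unfold swapMap; rw [dif_pos h]

lemma swapMap_coe_mid {c : ℝ} {x : HalfLine} (h1 : c ≤ (x : ℝ)) (h2 : (x : ℝ) < 2 * c) :
    ((swapMap c x : HalfLine) : ℝ) = (x : ℝ) - c := by
  unfold swapMap; rw [dif_neg (not_lt.mpr h1), dif_pos h2]

lemma swapMap_eq_high {c : ℝ} {x : HalfLine} (hc : 0 ≤ c) (h : 2 * c ≤ (x : ℝ)) :
    swapMap c x = x := by
  unfold swapMap
  rw [dif_neg (by push_neg; linarith), dif_neg (not_lt.mpr h)]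

/-- `IET([0,∞))` has commuting cyclic conjugates: every finitely generated group
`H` of interval exchange transformations of `[0, ∞)` is supported on `[0, n)` for
some `n ≥ 1`, and the interval exchange transformation `t` swapping `[0, n)` and
`[n, 2n)` by translations satisfies `t² = 1` and `[H, t H t⁻¹] = 1`. -/
theorem iet_halfLine_commutingCyclicConjugates
    (H : Subgroup (Equiv.Perm HalfLine)) (hfg : H.FG)
    (hIET : ∀ h ∈ H, IsIET h) :
    ∃ n : ℕ, 1 ≤ n ∧ (∀ h ∈ H, ∀ x : HalfLine, (n : ℝ) ≤ (x : ℝ) → h x = x) ∧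
      ∃ t : Equiv.Perm HalfLine, IsIET t ∧ t ^ 2 = 1 ∧
        ∀ h ∈ H, ∀ h' ∈ H, Commute h (t * h' * t⁻¹) := by
  classical
  obtain ⟨S, hS⟩ := hfg
  -- a common bound for the supports of the generators
  have hbound : ∃ C : ℝ, ∀ s ∈ S, ∀ x : HalfLine, C ≤ (x : ℝ) → s x = x := by
    have hSH : ∀ s ∈ S, IsIET s := by
      intro s hs
      exact hIET s (hS ▸ Subgroup.subset_closure hs)
    clear hS
    induction S using Finset.induction_on with
    | empty => exact ⟨0, fun s hs => absurd hs (Finset.notMem_empty s)⟩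
    | @insert a S' ha ih =>
      obtain ⟨C₁, hC₁⟩ := ih (fun s hs => hSH s (Finset.mem_insert_of_mem hs))
      obtain ⟨C₂, hC₂⟩ := (hSH a (Finset.mem_insert_self a S')).eventually_id
      refine ⟨max C₁ C₂, fun s hs x hx => ?_⟩
      rcases Finset.mem_insert.mp hs with rfl | hs'
      · exact hC₂ x (le_trans (le_max_right _ _) hx)
      · exact hC₁ s hs' x (le_trans (le_max_left _ _) hx)
  obtain ⟨C, hC⟩ := hbound
  set n : ℕ := max 1 ⌈C⌉₊ with hn
  have hn1 : 1 ≤ n := le_max_left _ _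
  have hCn : C ≤ (n : ℝ) := le_trans (Nat.le_ceil C) (by exact_mod_cast Nat.cast_le.mpr (le_max_right 1 ⌈C⌉₊))
  have hn0 : (0 : ℝ) < (n : ℝ) := by exact_mod_cast hn1
  -- the subgroup of permutations fixing `[n, ∞)` pointwise
  set K : Subgroup (Equiv.Perm HalfLine) :=
    { carrier := {g | ∀ x : HalfLine, (n : ℝ) ≤ (x : ℝ) → g x = x}
      one_mem' := fun _ _ => rfl
      mul_mem' := by
        intro g h hg hh x hx
        simp only [Set.mem_setOf_eq] at hg hh ⊢
        rw [Equiv.Perm.mul_apply, hh x hx, hg x hx]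
      inv_mem' := by
        intro g hg x hx
        simp only [Set.mem_setOf_eq] at hg ⊢
        have := hg x hx
        exact g.symm_apply_eq.mpr this.symm } with hK
  have hHK : ∀ h ∈ H, ∀ x : HalfLine, (n : ℝ) ≤ (x : ℝ) → h x = x := by
    have : H ≤ K := by
      rw [← hS]
      apply (Subgroup.closure_le K).mpr
      intro s hs x hx
      exact hC s hs x (le_trans hCn hx)
    intro h hh
    exact this hh
  -- the support of `h ∈ H` is contained in `[0, n)`
  have hHsupp : ∀ h ∈ H, ∀ x : HalfLine, (x : ℝ) < (n : ℝ) → ((h x : HalfLine) : ℝ) < (n : ℝ) := by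
    intro h hh x hx
    by_contra hc
    push_neg at hc
    have := hHK h hh (h x) hc
    have := h.injective this
    rw [this] at hc
    linarith
  -- construct the swap `t`
  set t : Equiv.Perm HalfLine := (swapMap_invol (n : ℝ) hn0).toPerm with ht
  have htapp : ∀ x : HalfLine, t x = swapMap (n : ℝ) x := fun x => rfl
  have htinv : ∀ x : HalfLine, t⁻¹ x = swapMap (n : ℝ) x := fun x => rfl
  refine ⟨n, hn1, hHK, t, ?_, ?_, ?_⟩
  · -- IsIET t
    refine ⟨2, ![0, (n : ℝ), 2 * n], ![(n : ℝ), -(n : ℝ), 0], rfl, ?_, ?_, ?_⟩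
    · rw [Fin.strictMono_iff_lt_succ]
      intro i
      fin_cases i
      · show (0 : ℝ) < (n : ℝ); exact hn0
      · show (n : ℝ) < 2 * (n : ℝ); linarith
    · intro i x hx1 hx2
      fin_cases i
      · have hx2' : (x : ℝ) < (n : ℝ) := hx2
        show ((t x : HalfLine) : ℝ) = (x : ℝ) + (n : ℝ)
        rw [htapp, swapMap_coe_low hx2']
      · have hx1' : (n : ℝ) ≤ (x : ℝ) := hx1
        have hx2' : (x : ℝ) < 2 * (n : ℝ) := hx2
        show ((t x : HalfLine) : ℝ) = (x : ℝ) + -(n : ℝ)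
        rw [htapp, swapMap_coe_mid hx1' hx2']; ring
    · intro x hx
      have hx' : 2 * (n : ℝ) ≤ (x : ℝ) := hx
      show ((t x : HalfLine) : ℝ) = (x : ℝ) + 0
      rw [htapp, swapMap_eq_high hn0.le hx', add_zero]
  · -- t ^ 2 = 1
    apply Equiv.ext
    intro x
    simp only [pow_two, Equiv.Perm.mul_apply, Equiv.Perm.one_apply]
    rw [htapp, htapp]
    exact swapMap_invol (n : ℝ) hn0 x
  · -- commuting conjugates
    intro h hh h' hh'
    apply commute_of_fixes h (t * h' * t⁻¹) (fun x => (x : ℝ) < (n : ℝ))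
    · intro x hx
      push_neg at hx
      exact hHK h hh x hx
    · intro x hx
      have hx0 := x.2
      simp only [Equiv.Perm.mul_apply]
      obtain ⟨y, hy⟩ : ∃ y : HalfLine, (y : ℝ) = (x : ℝ) + n :=
        ⟨⟨(x : ℝ) + n, by linarith⟩, rfl⟩
      have h1 : t⁻¹ x = y := by
        rw [htinv]; exact Subtype.ext (by rw [swapMap_coe_low hx, hy])
      have h3 : h' y = y := hHK h' hh' y (by rw [hy]; linarith)
      rw [h1, h3, htapp]
      apply Subtype.ext
      rw [swapMap_coe_mid (by rw [hy]; linarith) (by rw [hy]; linarith), hy]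
      ring
end
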